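/- arXiv:1710.01782 — 3 statements merged into one kernel-verified Lean document; each statement's English description precedes it below -/
import Mathlib

section
/- For every edge price α > (n−1)/2, no stable (pure Nash equilibrium) network (G(s),α) of a network creation game with n agents contains a cycle of length 3. -/
open scoped BigOperators

namespace NCG

variable {V : Type*} [Fintype V] [DecidableEq V]

/-- The network induced by a strategy vector `st`: `{u,v}` is an edge iff (at least)
one of the endpoints buys it, i.e. `v ∈ st u` or `u ∈ st v`. -/
def graph (st : V → Finset V) : SimpleGraph V where
  Adj u v := u ≠ v ∧ (v ∈ st u ∨ u ∈ st v)
  symm := ⟨fun u v h => ⟨h.1.symm, h.2.symm⟩⟩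
  loopless := ⟨fun u h => h.1 rfl⟩

open scoped Classical in
/-- The distance cost of agent `u`: the sum of the graph distances to all nodes if the
network is connected, and `⊤` otherwise. -/
noncomputable def distcost (st : V → Finset V) (u : V) : EReal :=
  if (graph st).Connected then (((∑ w : V, ((graph st).dist u w : ℝ)) : ℝ) : EReal) else ⊤

/-- The cost of agent `u`: `α` per bought edge plus the distance cost. -/
noncomputable def cost (α : ℝ) (st : V → Finset V) (u : V) : EReal :=
  ((α * (st u).card : ℝ) : EReal) + distcost st u

/-- A network is stable (a pure Nash equilibrium) if no agent `u` can strictly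
decrease her cost by unilaterally changing her own strategy set `st u`. -/
def Stable (α : ℝ) (st : V → Finset V) : Prop :=
  ∀ u : V, ∀ t : Finset V, u ∉ t → cost α st u ≤ cost α (Function.update st u t) u

/-- The social cost of a network: the sum of the costs of all agents. -/
noncomputable def socialCost (α : ℝ) (st : V → Finset V) : EReal :=
  ∑ u : V, cost α st u

/-- The optimal (minimum) social cost over all strategy vectors on agent set `W`. -/
noncomputable def optCost (α : ℝ) (W : Type*) [Fintype W] [DecidableEq W] : EReal :=
  sInf {c : EReal | ∃ st : W → Finset W, (∀ u, u ∉ st u) ∧ c = socialCost α st}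

/-- `T` is a shortest path tree of `G` rooted at `r`: a spanning tree of `G`
preserving all distances from `r`. -/
def IsSPT (G : SimpleGraph V) (r : V) (T : SimpleGraph V) : Prop :=
  T ≤ G ∧ T.IsTree ∧ ∀ x, T.dist r x = G.dist r x

/-- The subgraph of `G` induced on `S` is biconnected: it has at least 3 vertices,
it is connected, and it has no cut vertex. -/
def IsBiconnectedOn (G : SimpleGraph V) (S : Set V) : Prop :=
  3 ≤ S.ncard ∧ (G.induce S).Connected ∧ ∀ x ∈ S, (G.induce (S \ {x})).Connected

/-- `S` induces a biconnected component of `G`: a maximal biconnected induced subgraph. -/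
def IsBiconnectedComponent (G : SimpleGraph V) (S : Set V) : Prop :=
  IsBiconnectedOn G S ∧ ∀ S' : Set V, S ⊆ S' → IsBiconnectedOn G S' → S' = S

/-- `⟨v,u⟩` is a critical pair (with witnesses `v₁, v₂, u'` and biconnected component `H`)
of the network induced by the strategy vector `st`:
(1) `v ∈ H` buys the two distinct non-bridge edges `(v,v₁)` and `(v,v₂)` with `v₁,v₂ ∈ H`;
(2) `u ∈ H`, `u ≠ v`, buys an edge `(u,u')` with `u' ∈ H`, `u' ≠ v`;
(3) `d(v,u) ≥ 2`;
(4) some shortest path from `v` to `u` uses the edge `(v,v₁)`;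
(5) some shortest path from `v` to `u'` does not use the edge `(u,u')`. -/
def IsCriticalPair (st : V → Finset V) (H : Set V) (v u v₁ v₂ u' : V) : Prop :=
  IsBiconnectedComponent (graph st) H ∧
  v ∈ H ∧ v₁ ∈ H ∧ v₂ ∈ H ∧ v₁ ≠ v₂ ∧
  v₁ ∈ st v ∧ v₂ ∈ st v ∧
  ¬ (graph st).IsBridge s(v, v₁) ∧ ¬ (graph st).IsBridge s(v, v₂) ∧
  u ∈ H ∧ u ≠ v ∧ u' ∈ H ∧ u' ≠ v ∧ u' ∈ st u ∧
  2 ≤ (graph st).dist v u ∧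
  (∃ p : (graph st).Walk v u, p.IsPath ∧ p.length = (graph st).dist v u ∧
    s(v, v₁) ∈ p.edges) ∧
  (∃ p : (graph st).Walk v u', p.IsPath ∧ p.length = (graph st).dist v u' ∧
    s(u, u') ∉ p.edges)

/-- A critical pair is strong if moreover some shortest path from `u` to `v₂`
does not use the edge `(v,v₂)`. -/
def IsStrongCriticalPair (st : V → Finset V) (H : Set V) (v u v₁ v₂ u' : V) : Prop :=
  IsCriticalPair st H v u v₁ v₂ u' ∧
  ∃ p : (graph st).Walk u v₂, p.IsPath ∧ p.length = (graph st).dist u v₂ ∧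
    s(v, v₂) ∉ p.edges

/-- A cycle `c` in `G` is a min cycle if for every two vertices on the cycle, their
distance along the cycle equals their distance in `G`. -/
def IsMinCycle (G : SimpleGraph V) {a : V} (c : G.Walk a a) : Prop :=
  c.IsCycle ∧ ∀ (x : V) (hx : x ∈ c.toSubgraph.verts) (y : V) (hy : y ∈ c.toSubgraph.verts),
    c.toSubgraph.coe.dist ⟨x, hx⟩ ⟨y, hy⟩ = G.dist x y

/-- A cycle `c` of the network induced by `st` is directed if, traversed in one of the
two possible directions, every edge of the cycle is bought by its tail vertex. -/
def IsDirectedCycle (st : V → Finset V) {a : V} (c : (graph st).Walk a a) : Prop :=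
  c.IsCycle ∧
    ((∀ i < c.length, c.getVert (i + 1) ∈ st (c.getVert i)) ∨
     (∀ i < c.length, c.getVert i ∈ st (c.getVert (i + 1))))

/-- `c` is a centroid of (the subgraph of `G` induced on) `S`: every connected component
obtained from `S` by removing `c` contains at most `|S|/2` vertices. -/
def IsCentroidOn (G : SimpleGraph V) (S : Set V) (c : V) : Prop :=
  c ∈ S ∧ ∀ x ∈ S, x ≠ c →
    2 * {y | y ∈ S ∧ ∃ p : G.Walk x y, c ∉ p.support ∧ ∀ z ∈ p.support, z ∈ S}.ncard
      ≤ S.ncard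

end NCG

section AuxProof

open SimpleGraph

variable {V : Type*} [Fintype V] [DecidableEq V]

set_option linter.unusedSectionVars false

private lemma dist_split' {G : SimpleGraph V} {u w y : V} (p : G.Walk u w) (h : y ∈ p.support) :
    G.dist u y + G.dist y w ≤ p.length := by
  have h2 := congrArg Walk.length (p.take_spec h)
  rw [Walk.length_append] at h2
  calc G.dist u y + G.dist y w
      ≤ (p.takeUntil y h).length + (p.dropUntil y h).length :=
        add_le_add (SimpleGraph.dist_le _) (SimpleGraph.dist_le _)
    _ = p.length := h2

private lemma transfer' {G G' : SimpleGraph V} {x y z : V}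
    (hxz : G'.Adj x z) (hzy : G'.Adj z y)
    (hcov : ∀ a b, G.Adj a b → (a = x ∧ b = y) ∨ (a = y ∧ b = x) ∨ G'.Adj a b)
    {u w : V} (p : G.Walk u w) (hp : p.IsPath) :
    ∃ q : G'.Walk u w, q.length ≤ p.length + 1 ∧
      (s(x, y) ∉ p.edges → q.length ≤ p.length) := by
  induction p with
  | nil => exact ⟨.nil, by simp, fun _ => le_refl _⟩
  | @cons u b w hadj p ih =>
    rw [Walk.cons_isPath_iff] at hp
    obtain ⟨q', hq1, hq2⟩ := ih hp.1
    rcases hcov _ _ hadj with ⟨rfl, rfl⟩ | ⟨rfl, rfl⟩ | h'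
    · have hnot : s(u, b) ∉ p.edges := fun hc =>
        hp.2 (Walk.fst_mem_support_of_mem_edges p hc)
      refine ⟨.cons hxz (.cons hzy q'), ?_, ?_⟩
      · have := hq2 hnot
        simp only [Walk.length_cons]; omega
      · intro hc
        exact absurd (by simp [Walk.edges_cons]) hc
    · have hnot : s(b, u) ∉ p.edges := fun hc =>
        hp.2 (Walk.snd_mem_support_of_mem_edges p hc)
      refine ⟨.cons hzy.symm (.cons hxz.symm q'), ?_, ?_⟩
      · have := hq2 hnot
        simp only [Walk.length_cons]; omega
      · intro hc
        refine absurd ?_ hc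
        simp only [Walk.edges_cons, List.mem_cons]
        left
        exact Sym2.eq_swap
    · refine ⟨.cons h' q', ?_, ?_⟩
      · simp only [Walk.length_cons]; omega
      · intro hc
        simp only [Walk.edges_cons, List.mem_cons, not_or] at hc
        have := hq2 hc.2
        simp only [Walk.length_cons]; omega

private lemma reach' {G G' : SimpleGraph V} {x y z : V}
    (hxz : G'.Adj x z) (hzy : G'.Adj z y)
    (hcov : ∀ a b, G.Adj a b → (a = x ∧ b = y) ∨ (a = y ∧ b = x) ∨ G'.Adj a b)
    {u w : V} (p : G.Walk u w) : G'.Reachable u w := by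
  induction p with
  | nil => exact Reachable.refl _
  | @cons u b w hadj p ih =>
    refine Reachable.trans ?_ ih
    rcases hcov _ _ hadj with ⟨rfl, rfl⟩ | ⟨rfl, rfl⟩ | h'
    · exact ⟨.cons hxz hzy.toWalk⟩
    · exact ⟨.cons hzy.symm hxz.symm.toWalk⟩
    · exact ⟨h'.toWalk⟩

private lemma cost_eq' (α : ℝ) (st : V → Finset V) (u : V) (hc : (NCG.graph st).Connected) :
    NCG.cost α st u
      = (((α * (st u).card + ∑ w : V, ((NCG.graph st).dist u w : ℝ)) : ℝ) : EReal) := by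
  unfold NCG.cost NCG.distcost
  rw [if_pos hc, ← EReal.coe_add]

private lemma connected_of_stable' (α : ℝ) (st : V → Finset V)
    (hstable : NCG.Stable α st) (v0 : V) : (NCG.graph st).Connected := by
  by_contra hnc
  set t : Finset V := Finset.univ.erase v0 with ht
  have hv0t : v0 ∉ t := by simp [ht]
  have h := hstable v0 t hv0t
  set st' := Function.update st v0 t with hst'
  have hadj : ∀ w : V, w ≠ v0 → (NCG.graph st').Adj v0 w := by
    intro w hw
    refine ⟨fun hc => hw hc.symm, Or.inl ?_⟩
    rw [hst', Function.update_self, ht]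
    exact Finset.mem_erase.mpr ⟨hw, Finset.mem_univ w⟩
  haveI : Nonempty V := ⟨v0⟩
  have hconn' : (NCG.graph st').Connected := by
    refine ⟨fun a b => ?_⟩
    have key : ∀ w, (NCG.graph st').Reachable v0 w := by
      intro w
      by_cases hw : w = v0
      · rw [hw]
      · exact ⟨(hadj w hw).toWalk⟩
    exact (key a).symm.trans (key b)
  have hcost1 : NCG.cost α st v0 = ⊤ := by
    unfold NCG.cost NCG.distcost
    rw [if_neg hnc]
    exact EReal.add_top_of_ne_bot (EReal.coe_ne_bot _)
  have hcost2 : NCG.cost α st' v0 ≠ ⊤ := by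
    rw [cost_eq' α st' v0 hconn']
    exact EReal.coe_ne_top _
  rw [hcost1, top_le_iff] at h
  exact hcost2 h

private lemma key_ineq' (α : ℝ) (st : V → Finset V) (hself : ∀ u, u ∉ st u)
    (hstable : NCG.Stable α st) (hconn : (NCG.graph st).Connected)
    {x y z : V} (hxy : (NCG.graph st).Adj x y) (hyz : (NCG.graph st).Adj y z)
    (hzx : (NCG.graph st).Adj z x) (hbuy : y ∈ st x) :
    α ≤ ((Finset.univ.filter (fun w =>
        (NCG.graph st).dist x w = (NCG.graph st).dist y w + 1 ∧
        (NCG.graph st).dist x w ≤ (NCG.graph st).dist z w)).card : ℝ) := by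
  classical
  set S : Finset V := Finset.univ.filter (fun w =>
      (NCG.graph st).dist x w = (NCG.graph st).dist y w + 1 ∧
      (NCG.graph st).dist x w ≤ (NCG.graph st).dist z w) with hS
  set t : Finset V := (st x).erase y with ht
  have hxt : x ∉ t := fun hc => hself x (Finset.mem_of_mem_erase hc)
  set st' := Function.update st x t with hst'
  have hst'x : st' x = t := Function.update_self x t st
  have hst'o : ∀ a, a ≠ x → st' a = st a := fun a ha => Function.update_of_ne ha t st
  have hcardt : t.card + 1 = (st x).card := Finset.card_erase_add_one hbuy
  have hxz' : (NCG.graph st').Adj x z := by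
    refine ⟨hzx.ne', ?_⟩
    rcases hzx.2 with hm | hm
    · exact Or.inr (by rw [hst'o z hzx.ne]; exact hm)
    · exact Or.inl (by rw [hst'x, ht]; exact Finset.mem_erase.mpr ⟨hyz.ne', hm⟩)
  have hzy' : (NCG.graph st').Adj z y := by
    refine ⟨hyz.ne', ?_⟩
    rcases hyz.2 with hm | hm
    · exact Or.inr (by rw [hst'o y hxy.ne']; exact hm)
    · exact Or.inl (by rw [hst'o z hzx.ne]; exact hm)
  have hcov : ∀ a b, (NCG.graph st).Adj a b →
      (a = x ∧ b = y) ∨ (a = y ∧ b = x) ∨ (NCG.graph st').Adj a b := by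
    rintro a b ⟨hne, hm⟩
    by_cases hax : a = x
    · subst hax
      by_cases hby : b = y
      · exact Or.inl ⟨rfl, hby⟩
      · refine Or.inr (Or.inr ⟨hne, ?_⟩)
        rcases hm with hm | hm
        · exact Or.inl (by rw [hst'x, ht]; exact Finset.mem_erase.mpr ⟨hby, hm⟩)
        · exact Or.inr (by rw [hst'o b (Ne.symm hne)]; exact hm)
    · by_cases h2 : a = y ∧ b = x
      · exact Or.inr (Or.inl h2)
      · refine Or.inr (Or.inr ⟨hne, ?_⟩)
        rcases hm with hm | hm
        · exact Or.inl (by rw [hst'o a hax]; exact hm)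
        · by_cases hbx : b = x
          · subst hbx
            exact Or.inr (by
              rw [hst'x, ht]
              exact Finset.mem_erase.mpr ⟨fun hay => h2 ⟨hay, rfl⟩, hm⟩)
          · exact Or.inr (by rw [hst'o b hbx]; exact hm)
  haveI : Nonempty V := ⟨x⟩
  have hconn' : (NCG.graph st').Connected := by
    refine ⟨fun a b => ?_⟩
    obtain ⟨p⟩ := hconn.preconnected a b
    exact reach' hxz' hzy' hcov p
  have hdxy : (NCG.graph st).dist x y = 1 := SimpleGraph.dist_eq_one_iff_adj.mpr hxy
  have hdzx : (NCG.graph st).dist z x = 1 := SimpleGraph.dist_eq_one_iff_adj.mpr hzx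
  have hdxz' : (NCG.graph st').dist x z = 1 := SimpleGraph.dist_eq_one_iff_adj.mpr hxz'
  have hub : ∀ w, (NCG.graph st').dist x w ≤ (NCG.graph st).dist x w + 1 := by
    intro w
    obtain ⟨p, hp, hlen⟩ := hconn.exists_path_of_dist x w
    obtain ⟨q, hq1, -⟩ := transfer' hxz' hzy' hcov p hp
    calc (NCG.graph st').dist x w ≤ q.length := SimpleGraph.dist_le q
      _ ≤ p.length + 1 := hq1
      _ = _ := by rw [hlen]
  have heq : ∀ w, w ∉ S → (NCG.graph st').dist x w ≤ (NCG.graph st).dist x w := by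
    intro w hw
    have hw' : ¬ ((NCG.graph st).dist x w = (NCG.graph st).dist y w + 1 ∧
        (NCG.graph st).dist x w ≤ (NCG.graph st).dist z w) := fun hc =>
      hw (by rw [hS]; exact Finset.mem_filter.mpr ⟨Finset.mem_univ w, hc⟩)
    by_cases hc1 : (NCG.graph st).dist x w = (NCG.graph st).dist y w + 1
    · have hc2 : (NCG.graph st).dist z w < (NCG.graph st).dist x w := by
        by_contra hcc
        exact hw' ⟨hc1, by omega⟩
      obtain ⟨q, hq, hqlen⟩ := hconn.exists_path_of_dist z w
      have havoid : s(x, y) ∉ q.edges := by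
        intro hc
        have hxs : x ∈ q.support := Walk.fst_mem_support_of_mem_edges q hc
        have hsp := dist_split' q hxs
        rw [hqlen] at hsp
        omega
      obtain ⟨q', -, hq2⟩ := transfer' hxz' hzy' hcov q hq
      have hzw' : (NCG.graph st').dist z w ≤ (NCG.graph st).dist z w := by
        calc (NCG.graph st').dist z w ≤ q'.length := SimpleGraph.dist_le q'
          _ ≤ q.length := hq2 havoid
          _ = _ := hqlen
      have htri := hconn'.dist_triangle (u := x) (v := z) (w := w)
      omega
    · have hle' : (NCG.graph st).dist x w ≤ (NCG.graph st).dist y w := by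
        have htri := hconn.dist_triangle (u := x) (v := y) (w := w)
        omega
      obtain ⟨p, hp, hlen⟩ := hconn.exists_path_of_dist x w
      have havoid : s(x, y) ∉ p.edges := by
        intro hc
        have hys : y ∈ p.support := Walk.snd_mem_support_of_mem_edges p hc
        have hsp := dist_split' p hys
        rw [hlen] at hsp
        omega
      obtain ⟨q, -, hq2⟩ := transfer' hxz' hzy' hcov p hp
      calc (NCG.graph st').dist x w ≤ q.length := SimpleGraph.dist_le q
        _ ≤ p.length := hq2 havoid
        _ = _ := hlen
  have hstep := hstable x t hxt
  rw [← hst'] at hstep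
  rw [cost_eq' α st x hconn, cost_eq' α st' x hconn', EReal.coe_le_coe_iff] at hstep
  rw [hst'x] at hstep
  have hsum : ∑ w : V, ((NCG.graph st').dist x w : ℝ)
      ≤ (∑ w : V, ((NCG.graph st).dist x w : ℝ)) + S.card := by
    have h1 : ∀ w ∈ Finset.univ, ((NCG.graph st').dist x w : ℝ)
        ≤ ((NCG.graph st).dist x w : ℝ) + (if w ∈ S then (1 : ℝ) else 0) := by
      intro w _
      by_cases hwS : w ∈ S
      · rw [if_pos hwS]
        exact_mod_cast hub w
      · rw [if_neg hwS, add_zero]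
        exact_mod_cast heq w hwS
    calc ∑ w : V, ((NCG.graph st').dist x w : ℝ)
        ≤ ∑ w : V, (((NCG.graph st).dist x w : ℝ) + (if w ∈ S then (1 : ℝ) else 0)) :=
          Finset.sum_le_sum h1
      _ = (∑ w : V, ((NCG.graph st).dist x w : ℝ))
            + ∑ w : V, (if w ∈ S then (1 : ℝ) else 0) := Finset.sum_add_distrib
      _ = (∑ w : V, ((NCG.graph st).dist x w : ℝ)) + S.card := by
          congr 1
          simp
  have hcards : (t.card : ℝ) = ((st x).card : ℝ) - 1 := by
    have h := hcardt
    have : ((t.card : ℝ) + 1) = ((st x).card : ℝ) := by exact_mod_cast congrArg (Nat.cast : ℕ → ℝ) h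
    linarith
  rw [hcards] at hstep
  have hexp : α * (((st x).card : ℝ) - 1) = α * ((st x).card : ℝ) - α := by ring
  rw [hexp] at hstep
  linarith

private lemma counting' (α : ℝ) (hα : ((Fintype.card V : ℝ) - 1) / 2 < α)
    (S₁ S₂ : Finset V) (x : V) (h1 : α ≤ (S₁.card : ℝ)) (h2 : α ≤ (S₂.card : ℝ))
    (hd : Disjoint S₁ S₂) (hx1 : x ∉ S₁) (hx2 : x ∉ S₂) : False := by
  have hsub : S₁ ∪ S₂ ⊆ Finset.univ.erase x := by
    intro w hw
    rw [Finset.mem_union] at hw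
    refine Finset.mem_erase.mpr ⟨?_, Finset.mem_univ w⟩
    rintro rfl
    rcases hw with h | h
    exacts [hx1 h, hx2 h]
  have hcard := Finset.card_le_card hsub
  rw [Finset.card_union_of_disjoint hd, Finset.card_erase_of_mem (Finset.mem_univ x),
    Finset.card_univ] at hcard
  have hpos : 0 < Fintype.card V := Fintype.card_pos_iff.mpr ⟨x⟩
  have hc2 : S₁.card + S₂.card + 1 ≤ Fintype.card V := by omega
  have hc3 : (S₁.card : ℝ) + (S₂.card : ℝ) + 1 ≤ (Fintype.card V : ℝ) := by exact_mod_cast hc2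
  linarith

private lemma case_sameapex (α : ℝ) (st : V → Finset V) (hself : ∀ u, u ∉ st u)
    (hα : ((Fintype.card V : ℝ) - 1) / 2 < α)
    (hstable : NCG.Stable α st) (hconn : (NCG.graph st).Connected)
    {x y z : V} (hxy : (NCG.graph st).Adj x y) (hyz : (NCG.graph st).Adj y z)
    (hzx : (NCG.graph st).Adj z x) (hb1 : y ∈ st x) (hb2 : z ∈ st x) : False := by
  have h1 := key_ineq' α st hself hstable hconn hxy hyz hzx hb1
  have h2 := key_ineq' α st hself hstable hconn hzx.symm hyz.symm hxy.symm hb2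
  refine counting' α hα _ _ x h1 h2 ?_ ?_ ?_
  · rw [Finset.disjoint_left]
    intro w hw1 hw2
    rw [Finset.mem_filter] at hw1 hw2
    obtain ⟨-, c1, c2⟩ := hw1
    obtain ⟨-, c3, c4⟩ := hw2
    omega
  · intro hc
    rw [Finset.mem_filter] at hc
    obtain ⟨-, c1, -⟩ := hc
    rw [SimpleGraph.dist_self] at c1
    omega
  · intro hc
    rw [Finset.mem_filter] at hc
    obtain ⟨-, c1, -⟩ := hc
    rw [SimpleGraph.dist_self] at c1
    omega

private lemma case_chain (α : ℝ) (st : V → Finset V) (hself : ∀ u, u ∉ st u)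
    (hα : ((Fintype.card V : ℝ) - 1) / 2 < α)
    (hstable : NCG.Stable α st) (hconn : (NCG.graph st).Connected)
    {x y z : V} (hxy : (NCG.graph st).Adj x y) (hyz : (NCG.graph st).Adj y z)
    (hzx : (NCG.graph st).Adj z x) (hb1 : y ∈ st x) (hb2 : z ∈ st y) : False := by
  have h1 := key_ineq' α st hself hstable hconn hxy hyz hzx hb1
  have h2 := key_ineq' α st hself hstable hconn hyz hzx hxy hb2
  refine counting' α hα _ _ x h1 h2 ?_ ?_ ?_
  · rw [Finset.disjoint_left]
    intro w hw1 hw2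
    rw [Finset.mem_filter] at hw1 hw2
    obtain ⟨-, c1, c2⟩ := hw1
    obtain ⟨-, c3, c4⟩ := hw2
    omega
  · intro hc
    rw [Finset.mem_filter] at hc
    obtain ⟨-, c1, -⟩ := hc
    rw [SimpleGraph.dist_self] at c1
    omega
  · intro hc
    rw [Finset.mem_filter] at hc
    obtain ⟨-, c1, c2⟩ := hc
    rw [SimpleGraph.dist_self] at c2
    omega

end AuxProof


/-- For `α > (n−1)/2`, no stable network contains a cycle of length 3. -/
theorem no_cycle_length_three {V : Type*} [Fintype V] [DecidableEq V]
    (α : ℝ) (st : V → Finset V) (hself : ∀ u, u ∉ st u)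
    (hα : ((Fintype.card V : ℝ) - 1) / 2 < α)
    (hstable : NCG.Stable α st) :
    ¬ ∃ (a : V) (c : (NCG.graph st).Walk a a), c.IsCycle ∧ c.length = 3 := by
  rintro ⟨a, c, hcyc, hlen⟩
  have h0 : c.getVert 0 = a := SimpleGraph.Walk.getVert_zero c
  have h3 : c.getVert 3 = a := by
    have h := SimpleGraph.Walk.getVert_length c
    rwa [hlen] at h
  have A1 : (NCG.graph st).Adj a (c.getVert 1) := by
    have h := SimpleGraph.Walk.adj_getVert_succ c (i := 0) (by omega)
    rwa [h0] at h
  have A2 : (NCG.graph st).Adj (c.getVert 1) (c.getVert 2) :=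
    SimpleGraph.Walk.adj_getVert_succ c (i := 1) (by omega)
  have A3 : (NCG.graph st).Adj (c.getVert 2) a := by
    have h := SimpleGraph.Walk.adj_getVert_succ c (i := 2) (by omega)
    rwa [h3] at h
  set b := c.getVert 1 with hb'
  set e := c.getVert 2 with he'
  have hconn := connected_of_stable' α st hstable a
  rcases A1.2 with hb | hb <;> rcases A2.2 with he | he
  · exact case_chain α st hself hα hstable hconn A1 A2 A3 hb he
  · rcases A3.2 with hf | hf
    · exact case_sameapex α st hself hα hstable hconn A2.symm A1.symm A3.symm he hf
    · exact case_sameapex α st hself hα hstable hconn A1 A2 A3 hb hf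
  · exact case_sameapex α st hself hα hstable hconn A1.symm A3.symm A2.symm hb he
  · exact case_chain α st hself hα hstable hconn A2.symm A1.symm A3.symm he hb
end

section
/- For every edge price α > n−2, no stable (pure Nash equilibrium) network (G(s),α) of a network creation game with n ≥ 4 agents contains a cycle of length 4. -/
open scoped BigOperators

/-! ### Auxiliary lemmas -/

namespace NoC4

open SimpleGraph
set_option linter.unusedSectionVars false

variable {V : Type*} [Fintype V] [DecidableEq V]

lemma exists_path_eq_dist {G : SimpleGraph V} (h : G.Connected) (u x : V) :
    ∃ p : G.Walk u x, p.IsPath ∧ p.length = G.dist u x := by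
  obtain ⟨q, hq⟩ := h.exists_walk_length_eq_dist u x
  exact ⟨q.bypass, q.bypass_isPath,
    le_antisymm (hq ▸ q.length_bypass_le) (SimpleGraph.dist_le _)⟩

lemma path_first_edge {G : SimpleGraph V} {u v x : V} (p : G.Walk u x) (hp : p.IsPath)
    (he : s(u, v) ∈ p.edges) :
    ∃ q : G.Walk v x, s(u, v) ∉ q.edges ∧ q.length + 1 = p.length := by
  cases p with
  | nil => simp at he
  | @cons _ y _ h q =>
    rw [Walk.cons_isPath_iff] at hp
    rw [Walk.edges_cons, List.mem_cons] at he
    rcases he with he | he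
    · have hvy : v = y := Sym2.congr_right.mp he
      subst hvy
      exact ⟨q, fun hc => hp.2 (q.fst_mem_support_of_mem_edges hc), by simp⟩
    · exact absurd (q.fst_mem_support_of_mem_edges he) hp.2

set_option linter.unusedSectionVars false

lemma walk_del_of_avoid {G : SimpleGraph V} {u v a b : V} (p : G.Walk a b)
    (hav : s(u, v) ∉ p.edges) :
    ∃ q : (G.deleteEdges {s(u, v)}).Walk a b, q.length = p.length := by
  refine ⟨p.transfer _ (fun e he => ?_), p.length_transfer _⟩
  rw [edgeSet_deleteEdges]
  exact ⟨p.edges_subset_edgeSet he, fun h => hav (h ▸ he)⟩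

lemma reroute {G : SimpleGraph V} (hc : G.Connected) {u v : V} (huv : u ≠ v)
    (W : (G.deleteEdges {s(u, v)}).Walk u v) (x : V) :
    ∃ q : (G.deleteEdges {s(u, v)}).Walk u x,
      q.length + 1 ≤ G.dist u x + W.length := by
  obtain ⟨p, hp, hl⟩ := exists_path_eq_dist hc u x
  by_cases he : s(u, v) ∈ p.edges
  · obtain ⟨t, ht, htl⟩ := path_first_edge p hp he
    obtain ⟨t', ht'⟩ := walk_del_of_avoid t ht
    refine ⟨W.append t', ?_⟩
    rw [Walk.length_append, ht']
    omega
  · obtain ⟨q, hq⟩ := walk_del_of_avoid p he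
    refine ⟨q, ?_⟩
    have hW : 1 ≤ W.length :=
      Nat.pos_of_ne_zero (fun h0 => huv (W.eq_of_length_eq_zero h0))
    omega

lemma del_connected {G : SimpleGraph V} (hc : G.Connected) {u v : V} (huv : u ≠ v)
    (W : (G.deleteEdges {s(u, v)}).Walk u v) :
    (G.deleteEdges {s(u, v)}).Connected := by
  have reach : ∀ x, (G.deleteEdges {s(u, v)}).Reachable u x := fun x =>
    ⟨(reroute hc huv W x).choose⟩
  rw [SimpleGraph.connected_iff]
  exact ⟨fun x y => (reach x).symm.trans (reach y), ⟨u⟩⟩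

lemma del_dist_le {G : SimpleGraph V} (hc : G.Connected) {u v : V} (huv : u ≠ v)
    (W : (G.deleteEdges {s(u, v)}).Walk u v) (x : V) :
    (G.deleteEdges {s(u, v)}).dist u x + 1 ≤ G.dist u x + W.length := by
  obtain ⟨q, hq⟩ := reroute hc huv W x
  have := SimpleGraph.dist_le q
  omega

lemma dist_mono {G G' : SimpleGraph V} (h : G' ≤ G) (hc' : G'.Connected) (x y : V) :
    G.dist x y ≤ G'.dist x y := by
  obtain ⟨p, hp⟩ := hc'.exists_walk_length_eq_dist x y
  have := SimpleGraph.dist_le (p.mapLe h)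
  rwa [Walk.length_map, hp] at this

lemma dist_eq_two {G : SimpleGraph V} (hc : G.Connected) {x y z : V}
    (hxy : G.Adj x y) (hyz : G.Adj y z) (hxz : ¬ G.Adj x z) (hnexz : x ≠ z) :
    G.dist x z = 2 := by
  have h2 : G.dist x z ≤ 2 := by
    have := SimpleGraph.dist_le (Walk.cons hxy (Walk.cons hyz Walk.nil))
    simpa using this
  have h0 : G.dist x z ≠ 0 := fun h => hnexz (hc.dist_eq_zero_iff.mp h)
  have h1 : G.dist x z ≠ 1 := fun h => hxz (SimpleGraph.dist_eq_one_iff_adj.mp h)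
  omega

lemma mem_del_adj {G : SimpleGraph V} {u v x y : V} (h : G.Adj x y)
    (h1 : ¬(x = u ∧ y = v)) (h2 : ¬(x = v ∧ y = u)) :
    (G.deleteEdges {s(u, v)}).Adj x y := by
  rw [SimpleGraph.deleteEdges_adj]
  refine ⟨h, ?_⟩
  simp only [Set.mem_singleton_iff, Sym2.eq_iff]
  tauto

lemma behind_lt {G : SimpleGraph V} (hc : G.Connected) {u v w x : V}
    (hadjv : G.Adj u v) (hadjw : G.Adj u w) (hwv : w ≠ v)
    (hx : G.dist u x < (G.deleteEdges {s(u, v)}).dist u x) :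
    G.dist v x < G.dist w x := by
  obtain ⟨p, hp, hl⟩ := exists_path_eq_dist hc u x
  have he : s(u, v) ∈ p.edges := by
    by_contra he
    obtain ⟨q, hq⟩ := walk_del_of_avoid p he
    have := SimpleGraph.dist_le q
    omega
  obtain ⟨t, ht, htl⟩ := path_first_edge p hp he
  have hA : G.dist v x + 1 ≤ G.dist u x := by
    have := SimpleGraph.dist_le t
    omega
  have hB : G.dist u x ≤ G.dist w x := by
    by_contra hB
    push_neg at hB
    obtain ⟨r, hr, hrl⟩ := exists_path_eq_dist hc w x
    have hu : u ∉ r.support := by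
      intro hu
      have h1 := SimpleGraph.dist_le (r.dropUntil u hu)
      have h2 := Walk.length_dropUntil_le r hu
      omega
    have hne : s(u, v) ∉ (Walk.cons hadjw r).edges := by
      rw [Walk.edges_cons, List.mem_cons]
      rintro (h | h)
      · exact hwv (Sym2.congr_right.mp h).symm
      · exact hu (r.fst_mem_support_of_mem_edges h)
    obtain ⟨q, hq⟩ := walk_del_of_avoid (Walk.cons hadjw r) hne
    have := SimpleGraph.dist_le q
    rw [Walk.length_cons] at hq
    omega
  omega

lemma graph_adj (st : V → Finset V) (x y : V) :
    (NCG.graph st).Adj x y ↔ x ≠ y ∧ (y ∈ st x ∨ x ∈ st y) := Iff.rfl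

lemma graph_update_eq (st : V → Finset V) {u v : V} (hv : v ∈ st u) (hvu : u ∉ st v) :
    NCG.graph (Function.update st u ((st u).erase v))
      = (NCG.graph st).deleteEdges {s(u, v)} := by
  have hne : u ≠ v := fun h => by subst h; exact hvu hv
  ext x y
  rw [graph_adj, SimpleGraph.deleteEdges_adj, graph_adj]
  simp only [Set.mem_singleton_iff]
  by_cases hx : x = u <;> by_cases hy : y = u <;> by_cases hxv : x = v <;>
      by_cases hyv : y = v <;> subst_vars <;>
    simp_all [Function.update_apply, Finset.mem_erase, Sym2.eq_iff] <;>
    tauto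

lemma stable_connected {α : ℝ} {st : V → Finset V} (hn : 4 ≤ Fintype.card V)
    (hstable : NCG.Stable α st) : (NCG.graph st).Connected := by
  by_contra hc
  have hne : Nonempty V := Fintype.card_pos_iff.mp (by omega)
  obtain ⟨u⟩ := hne
  have hu : u ∉ Finset.univ.erase u := fun h => (Finset.mem_erase.mp h).1 rfl
  have h := hstable u (Finset.univ.erase u) hu
  set st' := Function.update st u (Finset.univ.erase u) with hst'
  have hconn' : (NCG.graph st').Connected := by
    have reach : ∀ x, (NCG.graph st').Reachable u x := by
      intro x
      rcases eq_or_ne x u with rfl | hx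
      · exact SimpleGraph.Reachable.refl _
      · refine SimpleGraph.Adj.reachable ?_
        rw [graph_adj]
        refine ⟨hx.symm, Or.inl ?_⟩
        rw [hst', Function.update_self]
        exact Finset.mem_erase.mpr ⟨hx, Finset.mem_univ x⟩
    rw [SimpleGraph.connected_iff]
    exact ⟨fun x y => (reach x).symm.trans (reach y), ⟨u⟩⟩
  have hLHS : NCG.cost α st u = ⊤ := by
    rw [NCG.cost, NCG.distcost, if_neg hc, EReal.add_top_of_ne_bot (EReal.coe_ne_bot _)]
  have hRHS : NCG.cost α st' u ≠ ⊤ := by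
    rw [NCG.cost, NCG.distcost, if_pos hconn', ← EReal.coe_add]
    exact EReal.coe_ne_top _
  rw [hLHS] at h
  exact hRHS (top_le_iff.mp h)

lemma unique_owner {α : ℝ} {st : V → Finset V} (hα : 0 < α)
    (hstable : NCG.Stable α st) (hself : ∀ w, w ∉ st w)
    (hconn : (NCG.graph st).Connected) {u v : V} (hv : v ∈ st u) : u ∉ st v := by
  intro hu
  have hne : v ≠ u := fun h => hself u (h ▸ hv)
  have hgr : NCG.graph (Function.update st u ((st u).erase v)) = NCG.graph st := by
    ext x y
    rw [graph_adj, graph_adj]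
    by_cases hx : x = u <;> by_cases hy : y = u <;> by_cases hxv : x = v <;>
        by_cases hyv : y = v <;> subst_vars <;>
      simp_all [Function.update_apply, Finset.mem_erase] <;>
      tauto
  have h := hstable u ((st u).erase v) (fun hc => hself u (Finset.mem_erase.mp hc).2)
  rw [NCG.cost, NCG.cost, NCG.distcost, NCG.distcost, hgr] at h
  rw [if_pos hconn] at h
  have hcard : ((st u).erase v).card = (st u).card - 1 := Finset.card_erase_of_mem hv
  have hpos : 1 ≤ (st u).card := Finset.card_pos.mpr ⟨v, hv⟩
  rw [Function.update_self, hcard, ← EReal.coe_add, ← EReal.coe_add,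
    EReal.coe_le_coe_iff] at h
  have : ((st u).card - 1 : ℕ) = ((st u).card : ℝ) - 1 := by
    push_cast [hpos]; ring
  rw [this] at h
  nlinarith [h]

noncomputable def behindSet (G : SimpleGraph V) (u v : V) : Finset V :=
  Finset.univ.filter (fun x => G.dist u x < (G.deleteEdges {s(u, v)}).dist u x)

lemma mem_behindSet {G : SimpleGraph V} {u v x : V} :
    x ∈ behindSet G u v ↔ G.dist u x < (G.deleteEdges {s(u, v)}).dist u x := by
  simp [behindSet]

lemma del_bound {α : ℝ} {st : V → Finset V} (hstable : NCG.Stable α st)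
    (hself : ∀ w, w ∉ st w) (hconn : (NCG.graph st).Connected)
    {u v : V} (hv : v ∈ st u) (hvu : u ∉ st v)
    (W : ((NCG.graph st).deleteEdges {s(u, v)}).Walk u v) :
    α ≤ ((W.length : ℝ) - 1) * (behindSet (NCG.graph st) u v).card := by
  have huv : u ≠ v := fun h => hself u (h ▸ hv)
  have hG'conn : ((NCG.graph st).deleteEdges {s(u, v)}).Connected :=
    del_connected hconn huv W
  have hgr := graph_update_eq st hv hvu
  have h := hstable u ((st u).erase v) (fun hc => hself u (Finset.mem_erase.mp hc).2)
  rw [NCG.cost, NCG.cost, NCG.distcost, NCG.distcost, hgr, if_pos hconn, if_pos hG'conn,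
    Function.update_self, Finset.card_erase_of_mem hv,
    ← EReal.coe_add, ← EReal.coe_add, EReal.coe_le_coe_iff] at h
  have hpos : 1 ≤ (st u).card := Finset.card_pos.mpr ⟨v, hv⟩
  have hcast : (((st u).card - 1 : ℕ) : ℝ) = ((st u).card : ℝ) - 1 := by
    push_cast [hpos]; ring
  rw [hcast] at h
  have hsum : α ≤ ∑ x : V,
      ((((NCG.graph st).deleteEdges {s(u, v)}).dist u x : ℝ)
        - ((NCG.graph st).dist u x : ℝ)) := by
    rw [Finset.sum_sub_distrib]
    linarith [h]
  have hbound : ∀ x : V,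
      ((((NCG.graph st).deleteEdges {s(u, v)}).dist u x : ℝ)
        - ((NCG.graph st).dist u x : ℝ))
      ≤ if x ∈ behindSet (NCG.graph st) u v then (W.length : ℝ) - 1 else 0 := by
    intro x
    by_cases hx : x ∈ behindSet (NCG.graph st) u v
    · rw [if_pos hx]
      have h1 := del_dist_le hconn huv W x
      have h2 : ((((NCG.graph st).deleteEdges {s(u, v)}).dist u x : ℝ)) + 1
          ≤ ((NCG.graph st).dist u x : ℝ) + W.length := by exact_mod_cast h1
      linarith
    · rw [if_neg hx]
      have h1 : (NCG.graph st).dist u x ≤ ((NCG.graph st).deleteEdges {s(u, v)}).dist u x :=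
        dist_mono (SimpleGraph.deleteEdges_le _) hG'conn u x
      have h2 : ¬ ((NCG.graph st).dist u x
          < ((NCG.graph st).deleteEdges {s(u, v)}).dist u x) :=
        fun hc => hx (mem_behindSet.mpr hc)
      have h3 : ((NCG.graph st).deleteEdges {s(u, v)}).dist u x
          = (NCG.graph st).dist u x := le_antisymm (not_lt.mp h2) h1
      rw [h3]
      simp
  calc α ≤ _ := hsum
    _ ≤ ∑ x : V, (if x ∈ behindSet (NCG.graph st) u v then (W.length : ℝ) - 1 else 0) :=
        Finset.sum_le_sum (fun x _ => hbound x)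
    _ = ((behindSet (NCG.graph st) u v).card : ℝ) * ((W.length : ℝ) - 1) := by
        rw [Finset.sum_ite_mem, Finset.univ_inter, Finset.sum_const, nsmul_eq_mul]
    _ = ((W.length : ℝ) - 1) * (behindSet (NCG.graph st) u v).card := mul_comm _ _

lemma alpha_pos {α : ℝ} (hn : 4 ≤ Fintype.card V)
    (hα : (Fintype.card V : ℝ) - 2 < α) : 0 < α := by
  have h4 : (4:ℝ) ≤ (Fintype.card V : ℝ) := by exact_mod_cast hn
  linarith

lemma no_triangle {α : ℝ} {st : V → Finset V} (hn : 4 ≤ Fintype.card V)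
    (hα : (Fintype.card V : ℝ) - 2 < α)
    (hstable : NCG.Stable α st) (hself : ∀ w, w ∉ st w)
    {u v w : V} (hv : v ∈ st u)
    (hadj_vw : (NCG.graph st).Adj v w) (hadj_wu : (NCG.graph st).Adj w u) : False := by
  have hconn := stable_connected (α := α) hn hstable
  have hα0 : 0 < α := alpha_pos hn hα
  have hvu := unique_owner hα0 hstable hself hconn hv
  have huv : u ≠ v := fun h => hself u (h ▸ hv)
  have hadj_uv : (NCG.graph st).Adj u v := ⟨huv, Or.inl hv⟩
  have hwv : w ≠ v := hadj_vw.ne'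
  have hwu : w ≠ u := hadj_wu.ne
  have a1 : ((NCG.graph st).deleteEdges {s(u, v)}).Adj u w :=
    mem_del_adj hadj_wu.symm (by rintro ⟨-, h⟩; exact hwv h) (by rintro ⟨h, -⟩; exact huv h)
  have a2 : ((NCG.graph st).deleteEdges {s(u, v)}).Adj w v :=
    mem_del_adj hadj_vw.symm (by rintro ⟨h, -⟩; exact hwu h) (by rintro ⟨h, -⟩; exact hwv h)
  have hb : α ≤ ((behindSet (NCG.graph st) u v).card : ℝ) := by
    have := del_bound hstable hself hconn hv hvu (Walk.cons a1 (Walk.cons a2 Walk.nil))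
    simp only [Walk.length_cons, Walk.length_nil] at this
    norm_num at this
    exact this
  have hu : u ∉ behindSet (NCG.graph st) u v := by
    rw [mem_behindSet]
    simp [SimpleGraph.dist_self]
  have hw : w ∉ behindSet (NCG.graph st) u v := by
    rw [mem_behindSet]
    have h1 : ((NCG.graph st).deleteEdges {s(u, v)}).dist u w ≤ 1 := by
      have := SimpleGraph.dist_le (Walk.cons a1 Walk.nil)
      simpa using this
    have h2 : (NCG.graph st).dist u w = 1 :=
      SimpleGraph.dist_eq_one_iff_adj.mpr hadj_wu.symm
    omega
  have hcard : (behindSet (NCG.graph st) u v).card + 2 ≤ Fintype.card V := by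
    have h1 : u ∉ insert w (behindSet (NCG.graph st) u v) := by
      simp only [Finset.mem_insert]
      rintro (h | h)
      · exact hwu h.symm
      · exact hu h
    have h2 := Finset.card_le_univ (insert u (insert w (behindSet (NCG.graph st) u v)))
    rw [Finset.card_insert_of_notMem h1, Finset.card_insert_of_notMem hw] at h2
    omega
  have : ((behindSet (NCG.graph st) u v).card : ℝ) + 2 ≤ (Fintype.card V : ℝ) := by
    exact_mod_cast hcard
  linarith

lemma card_bound {S1 S2 : Finset V} (hdisj : ∀ x, x ∈ S1 → x ∉ S2) {a c : V}
    (ha1 : a ∉ S1) (ha2 : a ∉ S2) (hc1 : c ∉ S1) (hc2 : c ∉ S2) (hac : a ≠ c) :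
    S1.card + S2.card + 2 ≤ Fintype.card V := by
  have hdis : Disjoint S1 S2 := Finset.disjoint_left.mpr hdisj
  have h2 : c ∉ S1 ∪ S2 := by
    rw [Finset.mem_union]; rintro (h | h) <;> [exact hc1 h; exact hc2 h]
  have h1 : a ∉ insert c (S1 ∪ S2) := by
    rw [Finset.mem_insert, Finset.mem_union]
    rintro (h | h | h)
    · exact hac h
    · exact ha1 h
    · exact ha2 h
  have h3 := Finset.card_le_univ (insert a (insert c (S1 ∪ S2)))
  rw [Finset.card_insert_of_notMem h1, Finset.card_insert_of_notMem h2,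
    Finset.card_union_of_disjoint hdis] at h3
  omega

lemma c4_diag {α : ℝ} {st : V → Finset V} (hn : 4 ≤ Fintype.card V)
    (hα : (Fintype.card V : ℝ) - 2 < α)
    (hstable : NCG.Stable α st) (hself : ∀ w, w ∉ st w)
    {a b c d : V} (hab : b ∈ st a) (hcd : d ∈ st c)
    (adj_bc : (NCG.graph st).Adj b c) (adj_da : (NCG.graph st).Adj d a)
    (hnac : ¬ (NCG.graph st).Adj a c) (hneac : a ≠ c) (hnebd : b ≠ d) : False := by
  have hconn := stable_connected (α := α) hn hstable
  have hα0 : 0 < α := alpha_pos hn hα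
  have hba := unique_owner hα0 hstable hself hconn hab
  have hdc := unique_owner hα0 hstable hself hconn hcd
  have hneab : a ≠ b := fun h => hself a (h ▸ hab)
  have adj_ab : (NCG.graph st).Adj a b := ⟨hneab, Or.inl hab⟩
  have hnecd : c ≠ d := fun h => hself c (h ▸ hcd)
  have adj_cd : (NCG.graph st).Adj c d := ⟨hnecd, Or.inl hcd⟩
  have hnebc : b ≠ c := adj_bc.ne
  have hneda : d ≠ a := adj_da.ne
  -- detour walk a-d-c-b in G - ab
  have e1 : ((NCG.graph st).deleteEdges {s(a, b)}).Adj a d :=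
    mem_del_adj adj_da.symm (by rintro ⟨-, h⟩; exact hnebd h.symm)
      (by rintro ⟨h, -⟩; exact hneab h)
  have e2 : ((NCG.graph st).deleteEdges {s(a, b)}).Adj d c :=
    mem_del_adj adj_cd.symm (by rintro ⟨h, -⟩; exact hneda h)
      (by rintro ⟨h, -⟩; exact hnebd h.symm)
  have e3 : ((NCG.graph st).deleteEdges {s(a, b)}).Adj c b :=
    mem_del_adj adj_bc.symm (by rintro ⟨h, -⟩; exact hneac h.symm)
      (by rintro ⟨h, -⟩; exact hnebc h.symm)
  -- detour walk c-b-a-d in G - cd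
  have f1 : ((NCG.graph st).deleteEdges {s(c, d)}).Adj c b :=
    mem_del_adj adj_bc.symm (by rintro ⟨-, h⟩; exact hnebd h)
      (by rintro ⟨h, -⟩; exact hnecd h)
  have f2 : ((NCG.graph st).deleteEdges {s(c, d)}).Adj b a :=
    mem_del_adj adj_ab.symm (by rintro ⟨h, -⟩; exact hnebc h)
      (by rintro ⟨h, -⟩; exact hnebd h)
  have f3 : ((NCG.graph st).deleteEdges {s(c, d)}).Adj a d :=
    mem_del_adj adj_da.symm (by rintro ⟨h, -⟩; exact hneac h)
      (by rintro ⟨h, -⟩; exact hneda h.symm)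
  have hb1 : α ≤ 2 * ((behindSet (NCG.graph st) a b).card : ℝ) := by
    have := del_bound hstable hself hconn hab hba
      (Walk.cons e1 (Walk.cons e2 (Walk.cons e3 Walk.nil)))
    simp only [Walk.length_cons, Walk.length_nil] at this
    norm_num at this
    exact this
  have hb2 : α ≤ 2 * ((behindSet (NCG.graph st) c d).card : ℝ) := by
    have := del_bound hstable hself hconn hcd hdc
      (Walk.cons f1 (Walk.cons f2 (Walk.cons f3 Walk.nil)))
    simp only [Walk.length_cons, Walk.length_nil] at this
    norm_num at this
    exact this
  have hdisj : ∀ x, x ∈ behindSet (NCG.graph st) a b → x ∉ behindSet (NCG.graph st) c d := by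
    intro x h1 h2
    rw [mem_behindSet] at h1 h2
    have k1 := behind_lt hconn adj_ab adj_da.symm hnebd.symm h1
    have k2 := behind_lt hconn adj_cd adj_bc.symm hnebd h2
    omega
  have ha1 : a ∉ behindSet (NCG.graph st) a b := by
    rw [mem_behindSet]; simp [SimpleGraph.dist_self]
  have hc2 : c ∉ behindSet (NCG.graph st) c d := by
    rw [mem_behindSet]; simp [SimpleGraph.dist_self]
  have hc1 : c ∉ behindSet (NCG.graph st) a b := by
    rw [mem_behindSet]
    have hd2 : (NCG.graph st).dist a c = 2 := dist_eq_two hconn adj_ab adj_bc hnac hneac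
    have hd2' : ((NCG.graph st).deleteEdges {s(a, b)}).dist a c ≤ 2 := by
      have := SimpleGraph.dist_le (Walk.cons e1 (Walk.cons e2 Walk.nil))
      simpa using this
    omega
  have ha2 : a ∉ behindSet (NCG.graph st) c d := by
    rw [mem_behindSet]
    have hd2 : (NCG.graph st).dist c a = 2 :=
      dist_eq_two hconn adj_bc.symm adj_ab.symm (fun h => hnac h.symm) hneac.symm
    have hd2' : ((NCG.graph st).deleteEdges {s(c, d)}).dist c a ≤ 2 := by
      have := SimpleGraph.dist_le (Walk.cons f1 (Walk.cons f2 Walk.nil))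
      simpa using this
    omega
  have hcount := card_bound hdisj ha1 ha2 hc1 hc2 hneac
  have hcount' : ((behindSet (NCG.graph st) a b).card : ℝ)
      + ((behindSet (NCG.graph st) c d).card : ℝ) + 2 ≤ (Fintype.card V : ℝ) := by
    exact_mod_cast hcount
  linarith

lemma c4_same {α : ℝ} {st : V → Finset V} (hn : 4 ≤ Fintype.card V)
    (hα : (Fintype.card V : ℝ) - 2 < α)
    (hstable : NCG.Stable α st) (hself : ∀ w, w ∉ st w)
    {a b c d : V} (hab : b ∈ st a) (had : d ∈ st a)
    (adj_bc : (NCG.graph st).Adj b c) (adj_cd : (NCG.graph st).Adj c d)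
    (hnac : ¬ (NCG.graph st).Adj a c) (hneac : a ≠ c) (hnebd : b ≠ d) : False := by
  have hconn := stable_connected (α := α) hn hstable
  have hα0 : 0 < α := alpha_pos hn hα
  have hba := unique_owner hα0 hstable hself hconn hab
  have hda := unique_owner hα0 hstable hself hconn had
  have hneab : a ≠ b := fun h => hself a (h ▸ hab)
  have adj_ab : (NCG.graph st).Adj a b := ⟨hneab, Or.inl hab⟩
  have hnead : a ≠ d := fun h => hself a (h ▸ had)
  have adj_ad : (NCG.graph st).Adj a d := ⟨hnead, Or.inl had⟩
  have hnebc : b ≠ c := adj_bc.ne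
  have hnecd : c ≠ d := adj_cd.ne
  -- detour walk a-d-c-b in G - ab
  have e1 : ((NCG.graph st).deleteEdges {s(a, b)}).Adj a d :=
    mem_del_adj adj_ad (by rintro ⟨-, h⟩; exact hnebd h.symm)
      (by rintro ⟨h, -⟩; exact hneab h)
  have e2 : ((NCG.graph st).deleteEdges {s(a, b)}).Adj d c :=
    mem_del_adj adj_cd.symm (by rintro ⟨h, -⟩; exact hnead h.symm)
      (by rintro ⟨h, -⟩; exact hnebd h.symm)
  have e3 : ((NCG.graph st).deleteEdges {s(a, b)}).Adj c b :=
    mem_del_adj adj_bc.symm (by rintro ⟨h, -⟩; exact hneac h.symm)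
      (by rintro ⟨h, -⟩; exact hnebc h.symm)
  -- detour walk a-b-c-d in G - ad
  have f1 : ((NCG.graph st).deleteEdges {s(a, d)}).Adj a b :=
    mem_del_adj adj_ab (by rintro ⟨-, h⟩; exact hnebd h)
      (by rintro ⟨h, -⟩; exact hnead h)
  have f2 : ((NCG.graph st).deleteEdges {s(a, d)}).Adj b c :=
    mem_del_adj adj_bc (by rintro ⟨h, -⟩; exact hneab h.symm)
      (by rintro ⟨h, -⟩; exact hnebd h)
  have f3 : ((NCG.graph st).deleteEdges {s(a, d)}).Adj c d :=
    mem_del_adj adj_cd (by rintro ⟨h, -⟩; exact hneac h.symm)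
      (by rintro ⟨h, -⟩; exact hnecd h)
  have hb1 : α ≤ 2 * ((behindSet (NCG.graph st) a b).card : ℝ) := by
    have := del_bound hstable hself hconn hab hba
      (Walk.cons e1 (Walk.cons e2 (Walk.cons e3 Walk.nil)))
    simp only [Walk.length_cons, Walk.length_nil] at this
    norm_num at this
    exact this
  have hb2 : α ≤ 2 * ((behindSet (NCG.graph st) a d).card : ℝ) := by
    have := del_bound hstable hself hconn had hda
      (Walk.cons f1 (Walk.cons f2 (Walk.cons f3 Walk.nil)))
    simp only [Walk.length_cons, Walk.length_nil] at this
    norm_num at this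
    exact this
  have hdisj : ∀ x, x ∈ behindSet (NCG.graph st) a b → x ∉ behindSet (NCG.graph st) a d := by
    intro x h1 h2
    rw [mem_behindSet] at h1 h2
    have k1 := behind_lt hconn adj_ab adj_ad hnebd.symm h1
    have k2 := behind_lt hconn adj_ad adj_ab hnebd h2
    omega
  have ha1 : a ∉ behindSet (NCG.graph st) a b := by
    rw [mem_behindSet]; simp [SimpleGraph.dist_self]
  have ha2 : a ∉ behindSet (NCG.graph st) a d := by
    rw [mem_behindSet]; simp [SimpleGraph.dist_self]
  have hd2 : (NCG.graph st).dist a c = 2 := dist_eq_two hconn adj_ab adj_bc hnac hneac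
  have hc1 : c ∉ behindSet (NCG.graph st) a b := by
    rw [mem_behindSet]
    have hd2' : ((NCG.graph st).deleteEdges {s(a, b)}).dist a c ≤ 2 := by
      have := SimpleGraph.dist_le (Walk.cons e1 (Walk.cons e2 Walk.nil))
      simpa using this
    omega
  have hc2 : c ∉ behindSet (NCG.graph st) a d := by
    rw [mem_behindSet]
    have hd2' : ((NCG.graph st).deleteEdges {s(a, d)}).dist a c ≤ 2 := by
      have := SimpleGraph.dist_le (Walk.cons f1 (Walk.cons f2 Walk.nil))
      simpa using this
    omega
  have hcount := card_bound hdisj ha1 ha2 hc1 hc2 hneac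
  have hcount' : ((behindSet (NCG.graph st) a b).card : ℝ)
      + ((behindSet (NCG.graph st) a d).card : ℝ) + 2 ≤ (Fintype.card V : ℝ) := by
    exact_mod_cast hcount
  linarith

end NoC4
/-- For `α > n−2`, no stable network with `n ≥ 4` agents contains a
cycle of length 4. -/
theorem no_cycle_length_four {V : Type*} [Fintype V] [DecidableEq V]
    (α : ℝ) (st : V → Finset V) (hself : ∀ u, u ∉ st u)
    (hn : 4 ≤ Fintype.card V)
    (hα : (Fintype.card V : ℝ) - 2 < α)
    (hstable : NCG.Stable α st) :
    ¬ ∃ (a : V) (c : (NCG.graph st).Walk a a), c.IsCycle ∧ c.length = 4 := by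
  rintro ⟨a, p, hcyc, hlen⟩
  cases p with
  | nil => simp at hlen
  | cons h1 p =>
  rename_i b
  cases p with
  | nil => simp at hlen
  | cons h2 p =>
  rename_i c
  cases p with
  | nil => simp at hlen
  | cons h3 p =>
  rename_i d
  cases p with
  | cons h4 p =>
    cases p with
    | nil =>
      clear hlen
      -- extract distinctness from the cycle
      have hnd := hcyc.support_nodup
      simp only [SimpleGraph.Walk.support_cons, SimpleGraph.Walk.support_nil,
        List.tail_cons, List.nodup_cons, List.mem_cons, List.mem_singleton,
        List.not_mem_nil, or_false, not_or] at hnd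
      obtain ⟨⟨hnbc, hnbd, -⟩, ⟨hncd, hnca⟩, hnda, -⟩ := hnd
      have hneac : a ≠ c := fun h => hnca h.symm
      have hnebd : b ≠ d := hnbd
      by_cases hac : (NCG.graph st).Adj a c
      · -- triangle a b c
        rcases ((NoC4.graph_adj st a b).mp h1).2 with hab | hba
        · exact NoC4.no_triangle hn hα hstable hself hab h2 hac.symm
        · exact NoC4.no_triangle hn hα hstable hself hba hac h2.symm
      by_cases hbd : (NCG.graph st).Adj b d
      · -- triangle b c d
        rcases ((NoC4.graph_adj st b c).mp h2).2 with hbc | hcb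
        · exact NoC4.no_triangle hn hα hstable hself hbc h3 hbd.symm
        · exact NoC4.no_triangle hn hα hstable hself hcb hbd h3.symm
      -- chordless 4-cycle
      by_cases hab : b ∈ st a
      · by_cases had : d ∈ st a
        · exact NoC4.c4_same hn hα hstable hself hab had h2 h3 hac hneac hnebd
        · have hda : a ∈ st d := (((NoC4.graph_adj st d a).mp h4).2).resolve_right had
          by_cases hdc : c ∈ st d
          · exact NoC4.c4_same hn hα hstable hself hda hdc h1 h2
              (fun h => hbd h.symm) (fun h => hnbd h.symm) hneac
          · have hcd : d ∈ st c := (((NoC4.graph_adj st c d).mp h3).2).resolve_right hdc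
            exact NoC4.c4_diag hn hα hstable hself hab hcd h2 h4 hac hneac hnebd
      · have hba : a ∈ st b := (((NoC4.graph_adj st a b).mp h1).2).resolve_left hab
        by_cases hbc : c ∈ st b
        · exact NoC4.c4_same hn hα hstable hself hba hbc h4.symm h3.symm hbd hnebd hneac
        · have hcb : b ∈ st c := (((NoC4.graph_adj st b c).mp h2).2).resolve_left hbc
          by_cases hcd : d ∈ st c
          · exact NoC4.c4_same hn hα hstable hself hcb hcd h1.symm h4.symm
              (fun h => hac h.symm) hneac.symm hnebd
          · have hdc : c ∈ st d := (((NoC4.graph_adj st c d).mp h3).2).resolve_left hcd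
            exact NoC4.c4_diag hn hα hstable hself hba hdc h4.symm h2.symm hbd hnebd hneac
    | cons h5 p =>
      simp only [SimpleGraph.Walk.length_cons] at hlen
      omega
  | nil =>
    simp only [SimpleGraph.Walk.length_cons, SimpleGraph.Walk.length_nil] at hlen
    omega
end

section
/- For every edge price α > 2n−6, every min cycle of a non-tree stable (pure Nash equilibrium) network (G(s),α) with n ≥ 4 agents is directed and has length at least 5. -/
open scoped BigOperators

open SimpleGraph

namespace NCGAux

/-- circular distance on `{0,...,k-1}` -/
def cdist (k a b : ℕ) : ℕ := min ((a - b) + (b - a)) (k - ((a - b) + (b - a)))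

lemma cdist_self (k a : ℕ) : cdist k a a = 0 := by simp [cdist]

lemma cdist_triangle {k a b c : ℕ} (ha : a < k) (hb : b < k) (hc : c < k) :
    cdist k a c ≤ cdist k a b + cdist k b c := by
  unfold cdist; omega

lemma cdist_step {k t : ℕ} (ht : t < k) : cdist k t ((t + 1) % k) ≤ 1 := by
  rcases Nat.lt_or_ge (t+1) k with h | h
  · rw [Nat.mod_eq_of_lt h]; unfold cdist; omega
  · have : t + 1 = k := by omega
    rw [this, Nat.mod_self]; unfold cdist; omega

lemma cdist_comm (k a b : ℕ) : cdist k a b = cdist k b a := by unfold cdist; omega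

lemma cdist_shift {k o a b : ℕ} (ho : o < k) (ha : a < k) (hb : b < k) :
    cdist k ((o + a) % k) ((o + b) % k) = cdist k a b := by
  have h1 : (o + a) % k = o + a ∨ (o + a) % k + k = o + a := by
    rcases Nat.lt_or_ge (o + a) k with h | h
    · exact Or.inl (Nat.mod_eq_of_lt h)
    · right
      have : o + a - k < k := by omega
      have e : (o + a) % k = (o + a - k) % k := by
        conv_lhs => rw [show o + a = (o + a - k) + k by omega]
        simp [Nat.add_mod_right]
      rw [e, Nat.mod_eq_of_lt this]; omega
  have h2 : (o + b) % k = o + b ∨ (o + b) % k + k = o + b := by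
    rcases Nat.lt_or_ge (o + b) k with h | h
    · exact Or.inl (Nat.mod_eq_of_lt h)
    · right
      have : o + b - k < k := by omega
      have e : (o + b) % k = (o + b - k) % k := by
        conv_lhs => rw [show o + b = (o + b - k) + k by omega]
        simp [Nat.add_mod_right]
      rw [e, Nat.mod_eq_of_lt this]; omega
  have ha' : (o + a) % k < k := Nat.mod_lt _ (by omega)
  have hb' : (o + b) % k < k := Nat.mod_lt _ (by omega)
  unfold cdist; omega

lemma mod_inj_of_lt {k o i j : ℕ} (ho : o < k) (hi : i < k) (hj : j < k)
    (h : (o + i) % k = (o + j) % k) : i = j := by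
  have h1 : (o + i) % k = o + i ∨ (o + i) % k + k = o + i := by
    rcases Nat.lt_or_ge (o + i) k with hh | hh
    · exact Or.inl (Nat.mod_eq_of_lt hh)
    · right
      have hlt : o + i - k < k := by omega
      have e : (o + i) % k = (o + i - k) % k := by
        conv_lhs => rw [show o + i = (o + i - k) + k by omega]
        simp [Nat.add_mod_right]
      rw [e, Nat.mod_eq_of_lt hlt]; omega
  have h2 : (o + j) % k = o + j ∨ (o + j) % k + k = o + j := by
    rcases Nat.lt_or_ge (o + j) k with hh | hh
    · exact Or.inl (Nat.mod_eq_of_lt hh)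
    · right
      have hlt : o + j - k < k := by omega
      have e : (o + j) % k = (o + j - k) % k := by
        conv_lhs => rw [show o + j = (o + j - k) + k by omega]
        simp [Nat.add_mod_right]
      rw [e, Nat.mod_eq_of_lt hlt]; omega
  have ha' : (o + i) % k < k := Nat.mod_lt _ (by omega)
  have hb' : (o + j) % k < k := Nat.mod_lt _ (by omega)
  omega

end NCGAux
open SimpleGraph

namespace NCGAux

variable {V : Type*} [Fintype V] [DecidableEq V]

/-- Transfer a walk to another graph that contains all its darts. -/
lemma walk_transfer {G H : SimpleGraph V} {a b : V} (p : G.Walk a b)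
    (h : ∀ x y : V, G.Adj x y → x ∈ p.support → y ∈ p.support → H.Adj x y) :
    ∃ q : H.Walk a b, q.length = p.length ∧ q.support = p.support := by
  induction p with
  | nil => exact ⟨Walk.nil, rfl, rfl⟩
  | cons hadj p ih =>
    obtain ⟨q, hq, hs⟩ := ih (fun x y hxy hx hy => h x y hxy (by simp [hx]) (by simp [hy]))
    exact ⟨Walk.cons (h _ _ hadj (by simp) (by simp [Walk.start_mem_support])) q,
      by simp [hq], by simp [hs]⟩

lemma graph_adj {st : V → Finset V} {a b : V} :
    (NCG.graph st).Adj a b ↔ a ≠ b ∧ (b ∈ st a ∨ a ∈ st b) := Iff.rfl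

lemma update_adj_of_ne {st : V → Finset V} {v : V} {t : Finset V} {a b : V}
    (hav : a ≠ v) (hbv : b ≠ v) :
    (NCG.graph (Function.update st v t)).Adj a b ↔ (NCG.graph st).Adj a b := by
  simp [graph_adj, Function.update_of_ne hav, Function.update_of_ne hbv]

lemma update_adj_self {st : V → Finset V} {v : V} {t : Finset V} {b : V} (hb : b ∈ t) (hbv : b ≠ v) :
    (NCG.graph (Function.update st v t)).Adj v b := by
  refine graph_adj.mpr ⟨hbv.symm, Or.inl ?_⟩
  simpa [Function.update_self] using hb

lemma update_adj_keep {st : V → Finset V} {v : V} {t : Finset V} {b : V}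
    (h : (NCG.graph st).Adj v b) (hb : b ∈ st v → b ∈ t) :
    (NCG.graph (Function.update st v t)).Adj v b := by
  obtain ⟨hne, h | h⟩ := graph_adj.mp h
  · exact graph_adj.mpr ⟨hne, Or.inl (by simpa [Function.update_self] using hb h)⟩
  · refine graph_adj.mpr ⟨hne, Or.inr ?_⟩
    rwa [Function.update_of_ne (fun hh : b = v => hne hh.symm)]

/-- A stable network (with at least 2 agents) is connected. -/
lemma stable_connected {α : ℝ} {st : V → Finset V} (hstable : NCG.Stable α st)
    (hcard : 2 ≤ Fintype.card V) : (NCG.graph st).Connected := by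
  by_contra hdis
  obtain ⟨u⟩ : Nonempty V := Fintype.card_pos_iff.mp (by omega)
  set t : Finset V := Finset.univ.erase u with ht
  have hut : u ∉ t := Finset.notMem_erase _ _
  have hadj : ∀ x : V, x ≠ u → (NCG.graph (Function.update st u t)).Adj u x := by
    intro x hx
    exact update_adj_self (by simp [ht, hx]) hx
  have hconn' : (NCG.graph (Function.update st u t)).Connected := by
    rw [connected_iff]
    refine ⟨fun a b => ?_, ⟨u⟩⟩
    have h1 : (NCG.graph (Function.update st u t)).Reachable u a := by
      by_cases ha : a = u
      · subst ha; rfl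
      · exact (hadj a ha).reachable
    have h2 : (NCG.graph (Function.update st u t)).Reachable u b := by
      by_cases hb : b = u
      · subst hb; rfl
      · exact (hadj b hb).reachable
    exact h1.symm.trans h2
  have hst := hstable u t hut
  rw [NCG.cost, NCG.cost, NCG.distcost, NCG.distcost, if_neg hdis, if_pos hconn'] at hst
  have htop : ((α * ((st u).card : ℝ) : ℝ) : EReal) + (⊤ : EReal) = ⊤ :=
    EReal.add_top_of_ne_bot (EReal.coe_ne_bot _)
  rw [htop, top_le_iff] at hst
  have : (Function.update st u t u).card = t.card := by rw [Function.update_self]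
  rw [← EReal.coe_add] at hst
  exact (EReal.coe_ne_top _) hst

/-- Real form of the stability inequality. -/
lemma stable_real {α : ℝ} {st : V → Finset V} (hstable : NCG.Stable α st)
    (hconn : (NCG.graph st).Connected) {v : V} {t : Finset V} (hvt : v ∉ t)
    (hconn' : (NCG.graph (Function.update st v t)).Connected) :
    α * ((st v).card : ℝ) + ∑ w : V, ((NCG.graph st).dist v w : ℝ) ≤
      α * (t.card : ℝ) + ∑ w : V, ((NCG.graph (Function.update st v t)).dist v w : ℝ) := by
  have hst := hstable v t hvt
  rw [NCG.cost, NCG.cost, NCG.distcost, NCG.distcost, if_pos hconn, if_pos hconn',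
    Function.update_self, ← EReal.coe_add, ← EReal.coe_add, EReal.coe_le_coe_iff] at hst
  exact hst

end NCGAux

namespace NCGAux2
open SimpleGraph NCGAux

variable {V : Type*} [Fintype V] [DecidableEq V]

/-- Case analysis for the detour construction. -/
lemma detour_case {G G' : SimpleGraph V} {a r e₁ e₂ w : V}
    (hA1 : ∀ x y : V, G.Adj x y → x ≠ a → y ≠ a → G'.Adj x y)
    (hA3 : ∀ b : V, G.Adj a b → b ≠ e₁ → b ≠ e₂ → G'.Adj a b)
    (hra : G'.Adj r a)
    (q₁ : G'.Walk r e₁) (hq₁ : q₁.length ≤ G.dist r a + 1)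
    (q₂ : G'.Walk r e₂) (hq₂ : q₂.length ≤ G.dist r a + 1)
    (h2 : 2 ≤ G.dist r a)
    (S₂ : G.Walk a w) (hS₂ : S₂.IsPath) {L1 : ℕ} (hL1 : G.dist r a ≤ L1) :
    ∃ q : G'.Walk r w, q.length ≤ L1 + S₂.length := by
  cases S₂ with
  | nil =>
    exact ⟨Walk.cons hra Walk.nil, by simp; omega⟩
  | @cons _ b _ hab S₃ =>
    have haS₃ : a ∉ S₃.support := ((Walk.cons_isPath_iff _ _).mp hS₂).2
    obtain ⟨T₃, hT₃l, hT₃s⟩ := walk_transfer S₃ (fun x y hxy hx hy =>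
      hA1 x y hxy (fun h => haS₃ (h ▸ hx)) (fun h => haS₃ (h ▸ hy)))
    by_cases hb1 : b = e₁
    · subst hb1
      exact ⟨q₁.append T₃, by rw [Walk.length_append, hT₃l]; simp [Walk.length_cons]; omega⟩
    · by_cases hb2 : b = e₂
      · subst hb2
        exact ⟨q₂.append T₃, by rw [Walk.length_append, hT₃l]; simp [Walk.length_cons]; omega⟩
      · exact ⟨Walk.cons hra (Walk.cons (hA3 b hab hb1 hb2) T₃),
          by simp [Walk.length_cons, hT₃l]; omega⟩

/-- Distances from `r` in the deviated graph are bounded by the old distances. -/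
lemma detour_claim {G G' : SimpleGraph V} {a r e₁ e₂ : V}
    (hconn : G.Connected)
    (hA1 : ∀ x y : V, G.Adj x y → x ≠ a → y ≠ a → G'.Adj x y)
    (hA3 : ∀ b : V, G.Adj a b → b ≠ e₁ → b ≠ e₂ → G'.Adj a b)
    (hra : G'.Adj r a)
    (q₁ : G'.Walk r e₁) (hq₁ : q₁.length ≤ G.dist r a + 1)
    (q₂ : G'.Walk r e₂) (hq₂ : q₂.length ≤ G.dist r a + 1)
    (h2 : 2 ≤ G.dist r a) :
    ∀ w : V, ∃ q : G'.Walk r w, q.length ≤ G.dist r w := by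
  intro w
  obtain ⟨S, hSp, hSl⟩ := hconn.exists_path_of_dist r w
  by_cases hv : a ∈ S.support
  · have hspec := S.take_spec hv
    have hlen : (S.takeUntil a hv).length + (S.dropUntil a hv).length = S.length := by
      conv_rhs => rw [← hspec]
      rw [Walk.length_append]
    have hd1 : G.dist r a ≤ (S.takeUntil a hv).length := dist_le _
    obtain ⟨q, hq⟩ := detour_case hA1 hA3 hra q₁ hq₁ q₂ hq₂ h2 (S.dropUntil a hv)
      (hSp.dropUntil hv) hd1
    exact ⟨q, by omega⟩
  · obtain ⟨q, hql, _⟩ := walk_transfer S (fun x y hxy hx hy =>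
      hA1 x y hxy (fun h => hv (h ▸ hx)) (fun h => hv (h ▸ hy)))
    exact ⟨q, by omega⟩

lemma detour_conn' {G' : SimpleGraph V} {r : V}
    (hG'd : ∀ w : V, Nonempty (G'.Walk r w)) : G'.Connected := by
  rw [connected_iff]
  refine ⟨fun x y => ?_, ⟨r⟩⟩
  obtain ⟨qx⟩ := hG'd x
  obtain ⟨qy⟩ := hG'd y
  exact (Walk.reachable qx).symm.trans (Walk.reachable qy)

lemma detour_conn {G G' : SimpleGraph V} {r : V}
    (hG'd : ∀ w : V, ∃ q : G'.Walk r w, q.length ≤ G.dist r w) : G'.Connected :=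
  detour_conn' (fun w => ⟨(hG'd w).choose⟩)

/-- The sum bound for the deviating agent `a` who buys a single edge to `r`. -/
lemma detour_sum {G G' : SimpleGraph V} {a r : V}
    (hG'conn : G'.Connected) (hra : G'.Adj r a) (hne : a ≠ r)
    (hG'd : ∀ w : V, ∃ q : G'.Walk r w, q.length ≤ G.dist r w) :
    (∑ w : V, G'.dist a w) + G.dist r a ≤ (Fintype.card V - 1) + ∑ w : V, G.dist r w := by
  have hclaim : ∀ w : V, G'.dist r w ≤ G.dist r w := fun w => by
    obtain ⟨q, hq⟩ := hG'd w
    exact le_trans (dist_le q) hq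
  have har : G'.dist a r ≤ 1 := dist_le (Walk.cons hra.symm Walk.nil)
  have hterm : ∀ w ∈ Finset.univ.erase a, G'.dist a w ≤ 1 + G.dist r w := by
    intro w _
    calc G'.dist a w ≤ G'.dist a r + G'.dist r w := hG'conn.dist_triangle
    _ ≤ 1 + G.dist r w := by
        have := hclaim w; omega
  have h0 : ∑ w : V, G'.dist a w = ∑ w ∈ Finset.univ.erase a, G'.dist a w := by
    rw [Finset.sum_erase _ (by simp)]
  have h1 : ∑ w ∈ Finset.univ.erase a, G'.dist a w ≤
      ∑ w ∈ Finset.univ.erase a, (1 + G.dist r w) := Finset.sum_le_sum hterm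
  have h2 : ∑ w ∈ Finset.univ.erase a, (1 + G.dist r w) =
      (Fintype.card V - 1) + ∑ w ∈ Finset.univ.erase a, G.dist r w := by
    rw [Finset.sum_add_distrib, Finset.sum_const, smul_eq_mul, mul_one,
      Finset.card_erase_of_mem (Finset.mem_univ a)]
    rfl
  have h3 : ∑ w ∈ Finset.univ.erase a, G.dist r w + G.dist r a =
      ∑ w : V, G.dist r w := Finset.sum_erase_add _ _ (Finset.mem_univ a)
  omega

end NCGAux2

namespace NCGAux2
open SimpleGraph NCGAux

variable {V : Type*} [Fintype V] [DecidableEq V]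

/-- The two-deviation argument: a "critical pair" forces `α ≤ 2n − 6`, a contradiction. -/
lemma crit {α : ℝ} {st : V → Finset V} (hself : ∀ w, w ∉ st w)
    (hstable : NCG.Stable α st) (hconn : (NCG.graph st).Connected)
    (hα : 2 * (Fintype.card V : ℝ) - 6 < α)
    {v v₁ v₂ u u' : V} (h12 : v₁ ≠ v₂) (hv1 : v₁ ∈ st v) (hv2 : v₂ ∈ st v) (hu' : u' ∈ st u)
    (huv : u ≠ v)
    (hd : 2 ≤ (NCG.graph st).dist v u)
    (W₁ : (NCG.graph st).Walk u v₁) (hW₁ : v ∉ W₁.support)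
    (hlW₁ : W₁.length ≤ (NCG.graph st).dist v u + 1)
    (W₂ : (NCG.graph st).Walk u v₂) (hW₂ : v ∉ W₂.support)
    (hlW₂ : W₂.length ≤ (NCG.graph st).dist v u + 1)
    (W₃ : (NCG.graph st).Walk v u') (hW₃ : u ∉ W₃.support)
    (hlW₃ : W₃.length ≤ (NCG.graph st).dist v u + 1) : False := by
  have hduv : (NCG.graph st).dist u v = (NCG.graph st).dist v u := SimpleGraph.dist_comm
  have hnadj : ¬ (NCG.graph st).Adj v u := by
    intro h
    rw [← dist_eq_one_iff_adj] at h
    omega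
  have hustv : u ∉ st v := fun h => hnadj (graph_adj.mpr ⟨fun he => huv he.symm, Or.inl h⟩)
  have hvstu : v ∉ st u := fun h => hnadj (graph_adj.mpr ⟨fun he => huv he.symm, Or.inr h⟩)
  -- Deviation of v : drop the edges to v₁, v₂ and buy an edge to u.
  set t₁ : Finset V := insert u ((st v) \ {v₁, v₂}) with ht₁
  have hvt₁ : v ∉ t₁ := by
    simp only [ht₁, Finset.mem_insert, Finset.mem_sdiff]
    push_neg
    exact ⟨huv.symm, fun h => absurd h (hself v)⟩
  have hA1₁ : ∀ x y : V, (NCG.graph st).Adj x y → x ≠ v → y ≠ v →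
      (NCG.graph (Function.update st v t₁)).Adj x y := fun x y h hx hy =>
    (update_adj_of_ne hx hy).mpr h
  have hA3₁ : ∀ b : V, (NCG.graph st).Adj v b → b ≠ v₁ → b ≠ v₂ →
      (NCG.graph (Function.update st v t₁)).Adj v b := by
    intro b h hb1 hb2
    refine update_adj_keep h (fun hb => ?_)
    simp only [ht₁, Finset.mem_insert, Finset.mem_sdiff, Finset.mem_singleton]
    right
    simp [hb, hb1, hb2]
  have hra₁ : (NCG.graph (Function.update st v t₁)).Adj u v :=
    (update_adj_self (by simp [ht₁]) huv).symm
  obtain ⟨q₁, hq₁l, _⟩ := walk_transfer W₁ (fun x y hxy hx hy =>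
    hA1₁ x y hxy (fun h => hW₁ (h ▸ hx)) (fun h => hW₁ (h ▸ hy)))
  obtain ⟨q₂, hq₂l, _⟩ := walk_transfer W₂ (fun x y hxy hx hy =>
    hA1₁ x y hxy (fun h => hW₂ (h ▸ hx)) (fun h => hW₂ (h ▸ hy)))
  have hclaim₁ := detour_claim hconn hA1₁ hA3₁ hra₁ q₁ (by omega) q₂ (by omega) (by omega)
  have hconn₁ : (NCG.graph (Function.update st v t₁)).Connected := detour_conn hclaim₁
  have hsum₁ := detour_sum hconn₁ hra₁ (fun h => huv (h.symm)) hclaim₁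
  have hcard₁ : t₁.card + 1 = (st v).card := by
    have hsub : {v₁, v₂} ⊆ st v := by
      intro x hx
      simp only [Finset.mem_insert, Finset.mem_singleton] at hx
      rcases hx with rfl | rfl <;> assumption
    have h2 : ({v₁, v₂} : Finset V).card = 2 := Finset.card_pair h12
    have hu : u ∉ (st v) \ {v₁, v₂} := fun h => hustv (Finset.mem_sdiff.mp h).1
    have hle := Finset.card_le_card hsub
    rw [ht₁, Finset.card_insert_of_notMem hu, Finset.card_sdiff_of_subset hsub, h2]
    omega
  have hstab₁ := stable_real hstable hconn hvt₁ hconn₁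
  -- Deviation of u : swap the edge to u' for an edge to v.
  set t₂ : Finset V := insert v ((st u).erase u') with ht₂
  have hut₂ : u ∉ t₂ := by
    simp only [ht₂, Finset.mem_insert]
    push_neg
    exact ⟨huv, fun h => absurd (Finset.mem_of_mem_erase h) (hself u)⟩
  have hA1₂ : ∀ x y : V, (NCG.graph st).Adj x y → x ≠ u → y ≠ u →
      (NCG.graph (Function.update st u t₂)).Adj x y := fun x y h hx hy =>
    (update_adj_of_ne hx hy).mpr h
  have hA3₂ : ∀ b : V, (NCG.graph st).Adj u b → b ≠ u' → b ≠ u' →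
      (NCG.graph (Function.update st u t₂)).Adj u b := by
    intro b h hb1 _
    refine update_adj_keep h (fun hb => ?_)
    simp only [ht₂, Finset.mem_insert, Finset.mem_erase]
    exact Or.inr ⟨hb1, hb⟩
  have hra₂ : (NCG.graph (Function.update st u t₂)).Adj v u :=
    (update_adj_self (by simp [ht₂]) huv.symm).symm
  obtain ⟨q₃, hq₃l, _⟩ := walk_transfer W₃ (fun x y hxy hx hy =>
    hA1₂ x y hxy (fun h => hW₃ (h ▸ hx)) (fun h => hW₃ (h ▸ hy)))
  have hclaim₂ := detour_claim hconn hA1₂ hA3₂ hra₂ q₃ (by omega) q₃ (by omega) (by omega)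
  have hconn₂ : (NCG.graph (Function.update st u t₂)).Connected := detour_conn hclaim₂
  have hsum₂ := detour_sum hconn₂ hra₂ huv hclaim₂
  have hcard₂ : t₂.card = (st u).card := by
    have hv' : v ∉ (st u).erase u' := fun h => hvstu (Finset.mem_of_mem_erase h)
    have h1 : 1 ≤ (st u).card := Finset.card_pos.mpr ⟨u', hu'⟩
    rw [ht₂, Finset.card_insert_of_notMem hv', Finset.card_erase_of_mem hu']
    omega
  have hstab₂ := stable_real hstable hconn hut₂ hconn₂
  -- put everything together over the reals
  have hn1 : 1 ≤ Fintype.card V := @Fintype.card_pos V _ ⟨v⟩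
  have hsum₁' : (∑ w : V, (NCG.graph (Function.update st v t₁)).dist v w)
      + (NCG.graph st).dist v u + 1 ≤ Fintype.card V + ∑ w : V, (NCG.graph st).dist u w := by
    omega
  have hsum₂' : (∑ w : V, (NCG.graph (Function.update st u t₂)).dist u w)
      + (NCG.graph st).dist v u + 1 ≤ Fintype.card V + ∑ w : V, (NCG.graph st).dist v w := by
    omega
  have hr₁ : (∑ w : V, ((NCG.graph (Function.update st v t₁)).dist v w : ℝ))
      + ((NCG.graph st).dist v u : ℝ) + 1 ≤ (Fintype.card V : ℝ)
      + ∑ w : V, ((NCG.graph st).dist u w : ℝ) := by exact_mod_cast hsum₁'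
  have hr₂ : (∑ w : V, ((NCG.graph (Function.update st u t₂)).dist u w : ℝ))
      + ((NCG.graph st).dist v u : ℝ) + 1 ≤ (Fintype.card V : ℝ)
      + ∑ w : V, ((NCG.graph st).dist v w : ℝ) := by exact_mod_cast hsum₂'
  have hc₁ : (t₁.card : ℝ) + 1 = ((st v).card : ℝ) := by exact_mod_cast hcard₁
  have hc₂ : (t₂.card : ℝ) = ((st u).card : ℝ) := by exact_mod_cast hcard₂
  have hdr : (2 : ℝ) ≤ ((NCG.graph st).dist v u : ℝ) := by exact_mod_cast hd
  rw [hc₂] at hstab₂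
  have hsd : ∑ w : V, ((NCG.graph st).dist u w : ℝ) =
      ∑ w : V, ((NCG.graph st).dist w u : ℝ) := by
    apply Finset.sum_congr rfl
    intro w _
    rw [SimpleGraph.dist_comm]
  rw [hsd] at hr₁
  have hsd₂ : ∑ w : V, ((NCG.graph st).dist u w : ℝ) =
      ∑ w : V, ((NCG.graph st).dist w u : ℝ) := hsd
  nlinarith [hstab₁, hstab₂, hr₁, hr₂, hc₁, hdr, hα]

end NCGAux2

namespace NCGAux2
open SimpleGraph NCGAux

variable {V : Type*} [Fintype V] [DecidableEq V]

lemma del_claim {G G' : SimpleGraph V} {v b : V}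
    (hconn : G.Connected)
    (hA1 : ∀ x y : V, G.Adj x y → x ≠ v → y ≠ v → G'.Adj x y)
    (hA3 : ∀ y : V, G.Adj v y → y ≠ b → G'.Adj v y)
    (D : G'.Walk v b) (hD : 1 ≤ D.length) :
    ∀ w : V, ∃ q : G'.Walk v w, q.length + 1 ≤ G.dist v w + D.length := by
  intro w
  obtain ⟨S, hSp, hSl⟩ := hconn.exists_path_of_dist v w
  cases S with
  | nil =>
    refine ⟨Walk.nil, ?_⟩
    simp only [Walk.length_nil] at hSl ⊢
    omega
  | @cons _ b₀ _ h S₃ =>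
    have hvS₃ : v ∉ S₃.support := ((Walk.cons_isPath_iff _ _).mp hSp).2
    obtain ⟨T₃, hT₃l, _⟩ := walk_transfer S₃ (fun x y hxy hx hy =>
      hA1 x y hxy (fun hh => hvS₃ (hh ▸ hx)) (fun hh => hvS₃ (hh ▸ hy)))
    simp only [Walk.length_cons] at hSl
    by_cases hb : b₀ = b
    · subst hb
      refine ⟨D.append T₃, ?_⟩
      rw [Walk.length_append, hT₃l]
      omega
    · refine ⟨Walk.cons (hA3 b₀ h hb) T₃, ?_⟩
      rw [Walk.length_cons, hT₃l]
      omega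

lemma sum_bound_two_exceptions (f g : V → ℕ) (m : ℕ) (a c : V) (hac : a ≠ c)
    (hfa : f a ≤ g a) (hfc : f c ≤ g c) (hother : ∀ w : V, w ≠ a → w ≠ c → f w ≤ g w + m) :
    ∑ w : V, f w ≤ (∑ w : V, g w) + (Fintype.card V - 2) * m := by
  have hca : c ∈ Finset.univ.erase a := Finset.mem_erase.mpr ⟨fun h => hac h.symm, Finset.mem_univ _⟩
  have e1f := Finset.sum_erase_add Finset.univ f (Finset.mem_univ a)
  have e2f := Finset.sum_erase_add (Finset.univ.erase a) f hca
  have e1g := Finset.sum_erase_add Finset.univ g (Finset.mem_univ a)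
  have e2g := Finset.sum_erase_add (Finset.univ.erase a) g hca
  have hcards : ((Finset.univ.erase a).erase c).card = Fintype.card V - 2 := by
    rw [Finset.card_erase_of_mem hca, Finset.card_erase_of_mem (Finset.mem_univ a)]
    simp [Finset.card_univ]
    omega
  have hb : ∑ w ∈ (Finset.univ.erase a).erase c, f w ≤
      (∑ w ∈ (Finset.univ.erase a).erase c, g w) + (Fintype.card V - 2) * m := by
    calc ∑ w ∈ (Finset.univ.erase a).erase c, f w
        ≤ ∑ w ∈ (Finset.univ.erase a).erase c, (g w + m) := by
          refine Finset.sum_le_sum (fun w hw => ?_)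
          have hw1 := (Finset.mem_erase.mp hw).1
          have hw2 := (Finset.mem_erase.mp (Finset.mem_erase.mp hw).2).1
          exact hother w hw2 hw1
      _ = (∑ w ∈ (Finset.univ.erase a).erase c, g w) + (Fintype.card V - 2) * m := by
          rw [Finset.sum_add_distrib, Finset.sum_const, smul_eq_mul, hcards]
  omega

lemma sum_bound_three_exceptions (f g : V → ℕ) (m : ℕ) (a c e : V)
    (hac : a ≠ c) (hae : a ≠ e) (hce : c ≠ e)
    (hfa : f a ≤ g a) (hfc : f c ≤ g c) (hfe : f e ≤ g e)
    (hother : ∀ w : V, w ≠ a → w ≠ c → w ≠ e → f w ≤ g w + m) :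
    ∑ w : V, f w ≤ (∑ w : V, g w) + (Fintype.card V - 3) * m := by
  have hca : c ∈ Finset.univ.erase a := Finset.mem_erase.mpr ⟨fun h => hac h.symm, Finset.mem_univ _⟩
  have hea : e ∈ (Finset.univ.erase a).erase c := Finset.mem_erase.mpr
    ⟨fun h => hce h.symm, Finset.mem_erase.mpr ⟨fun h => hae h.symm, Finset.mem_univ _⟩⟩
  have e1f := Finset.sum_erase_add Finset.univ f (Finset.mem_univ a)
  have e2f := Finset.sum_erase_add (Finset.univ.erase a) f hca
  have e3f := Finset.sum_erase_add ((Finset.univ.erase a).erase c) f hea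
  have e1g := Finset.sum_erase_add Finset.univ g (Finset.mem_univ a)
  have e2g := Finset.sum_erase_add (Finset.univ.erase a) g hca
  have e3g := Finset.sum_erase_add ((Finset.univ.erase a).erase c) g hea
  have hcards : (((Finset.univ.erase a).erase c).erase e).card = Fintype.card V - 3 := by
    rw [Finset.card_erase_of_mem hea, Finset.card_erase_of_mem hca,
      Finset.card_erase_of_mem (Finset.mem_univ a)]
    simp [Finset.card_univ]
    omega
  have hb : ∑ w ∈ (((Finset.univ.erase a).erase c).erase e), f w ≤
      (∑ w ∈ (((Finset.univ.erase a).erase c).erase e), g w) + (Fintype.card V - 3) * m := by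
    calc ∑ w ∈ (((Finset.univ.erase a).erase c).erase e), f w
        ≤ ∑ w ∈ (((Finset.univ.erase a).erase c).erase e), (g w + m) := by
          refine Finset.sum_le_sum (fun w hw => ?_)
          have hw1 := (Finset.mem_erase.mp hw).1
          have hw' := (Finset.mem_erase.mp hw).2
          have hw2 := (Finset.mem_erase.mp hw').1
          have hw3 := (Finset.mem_erase.mp (Finset.mem_erase.mp hw').2).1
          exact hother w hw3 hw2 hw1
      _ = _ := by
          rw [Finset.sum_add_distrib, Finset.sum_const, smul_eq_mul, hcards]
  omega

end NCGAux2

namespace NCGAux2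
open SimpleGraph NCGAux

variable {V : Type*} [Fintype V] [DecidableEq V]

lemma no_triangle {α : ℝ} {st : V → Finset V} (hself : ∀ w, w ∉ st w)
    (hstable : NCG.Stable α st) (hconn : (NCG.graph st).Connected)
    (hn : 4 ≤ Fintype.card V) (hα : 2 * (Fintype.card V : ℝ) - 6 < α)
    {x0 x1 x2 : V} (h01 : (NCG.graph st).Adj x0 x1) (h12 : (NCG.graph st).Adj x1 x2)
    (h20 : (NCG.graph st).Adj x2 x0) (hbuy : x1 ∈ st x0) : False := by
  set t : Finset V := (st x0).erase x1 with ht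
  have hvt : x0 ∉ t := fun h => hself x0 (Finset.mem_of_mem_erase h)
  have hA1 : ∀ x y : V, (NCG.graph st).Adj x y → x ≠ x0 → y ≠ x0 →
      (NCG.graph (Function.update st x0 t)).Adj x y := fun x y h hx hy =>
    (update_adj_of_ne hx hy).mpr h
  have hA3 : ∀ y : V, (NCG.graph st).Adj x0 y → y ≠ x1 →
      (NCG.graph (Function.update st x0 t)).Adj x0 y := by
    intro y h hy
    exact update_adj_keep h (fun hmem => Finset.mem_erase.mpr ⟨hy, hmem⟩)
  have hne21 : x2 ≠ x1 := h12.ne'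
  have hne20 : x2 ≠ x0 := h20.ne
  have hne10 : x1 ≠ x0 := h01.ne'
  have hadj02' : (NCG.graph (Function.update st x0 t)).Adj x0 x2 := hA3 x2 h20.symm hne21
  have hadj21' : (NCG.graph (Function.update st x0 t)).Adj x2 x1 := hA1 x2 x1 h12.symm hne20 hne10
  set D : (NCG.graph (Function.update st x0 t)).Walk x0 x1 :=
    Walk.cons hadj02' (Walk.cons hadj21' Walk.nil) with hD
  have hDl : D.length = 2 := by simp [hD]
  have hclaim := del_claim hconn hA1 hA3 D (by omega)
  have hconn' : (NCG.graph (Function.update st x0 t)).Connected :=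
    detour_conn' (fun w => ⟨(hclaim w).choose⟩)
  have hd' : ∀ w : V, (NCG.graph (Function.update st x0 t)).dist x0 w ≤
      (NCG.graph st).dist x0 w + 1 := by
    intro w
    obtain ⟨q, hq⟩ := hclaim w
    have := dist_le q
    omega
  have hsum : (∑ w : V, (NCG.graph (Function.update st x0 t)).dist x0 w) ≤
      (∑ w : V, (NCG.graph st).dist x0 w) + (Fintype.card V - 2) * 1 := by
    refine sum_bound_two_exceptions _ _ 1 x0 x2 hne20.symm ?_ ?_ (fun w _ _ => hd' w)
    · simp [SimpleGraph.dist_self]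
    · have h1 : (NCG.graph (Function.update st x0 t)).dist x0 x2 ≤ 1 :=
        dist_le (Walk.cons hadj02' Walk.nil)
      have h2 : (NCG.graph st).dist x0 x2 = 1 := dist_eq_one_iff_adj.mpr h20.symm
      omega
  have hcard : t.card + 1 = (st x0).card := by
    rw [ht, Finset.card_erase_of_mem hbuy]
    have : 1 ≤ (st x0).card := Finset.card_pos.mpr ⟨x1, hbuy⟩
    omega
  have hstab := stable_real hstable hconn hvt hconn'
  have hsum' : (∑ w : V, (NCG.graph (Function.update st x0 t)).dist x0 w) + 2 ≤
      (∑ w : V, (NCG.graph st).dist x0 w) + Fintype.card V := by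
    have : 4 ≤ Fintype.card V := hn
    omega
  have hsr : (∑ w : V, ((NCG.graph (Function.update st x0 t)).dist x0 w : ℝ)) + 2 ≤
      (∑ w : V, ((NCG.graph st).dist x0 w : ℝ)) + (Fintype.card V : ℝ) := by
    exact_mod_cast hsum'
  have h4r : (4 : ℝ) ≤ (Fintype.card V : ℝ) := by exact_mod_cast hn
  have hc : (t.card : ℝ) + 1 = ((st x0).card : ℝ) := by exact_mod_cast hcard
  nlinarith [hstab, hsr, hc, hα, h4r]

lemma no_c4 {α : ℝ} {st : V → Finset V} (hself : ∀ w, w ∉ st w)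
    (hstable : NCG.Stable α st) (hconn : (NCG.graph st).Connected)
    (hn : 4 ≤ Fintype.card V) (hα : 2 * (Fintype.card V : ℝ) - 6 < α)
    {x0 x1 x2 x3 : V} (h01 : (NCG.graph st).Adj x0 x1) (h12 : (NCG.graph st).Adj x1 x2)
    (h23 : (NCG.graph st).Adj x2 x3) (h30 : (NCG.graph st).Adj x3 x0)
    (hd02 : 2 ≤ (NCG.graph st).dist x0 x2) (hne13 : x3 ≠ x1) (hbuy : x1 ∈ st x0) : False := by
  set t : Finset V := (st x0).erase x1 with ht
  have hvt : x0 ∉ t := fun h => hself x0 (Finset.mem_of_mem_erase h)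
  have hA1 : ∀ x y : V, (NCG.graph st).Adj x y → x ≠ x0 → y ≠ x0 →
      (NCG.graph (Function.update st x0 t)).Adj x y := fun x y h hx hy =>
    (update_adj_of_ne hx hy).mpr h
  have hA3 : ∀ y : V, (NCG.graph st).Adj x0 y → y ≠ x1 →
      (NCG.graph (Function.update st x0 t)).Adj x0 y := by
    intro y h hy
    exact update_adj_keep h (fun hmem => Finset.mem_erase.mpr ⟨hy, hmem⟩)
  have hne20 : x2 ≠ x0 := by
    intro h
    subst h
    simp [SimpleGraph.dist_self] at hd02
  have hne30 : x3 ≠ x0 := h30.ne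
  have hne10 : x1 ≠ x0 := h01.ne'
  have hne21 : x2 ≠ x1 := h12.ne'
  have hadj03' : (NCG.graph (Function.update st x0 t)).Adj x0 x3 := hA3 x3 h30.symm hne13
  have hadj32' : (NCG.graph (Function.update st x0 t)).Adj x3 x2 := hA1 x3 x2 h23.symm hne30 hne20
  have hadj21' : (NCG.graph (Function.update st x0 t)).Adj x2 x1 := hA1 x2 x1 h12.symm hne20 hne10
  set D : (NCG.graph (Function.update st x0 t)).Walk x0 x1 :=
    Walk.cons hadj03' (Walk.cons hadj32' (Walk.cons hadj21' Walk.nil)) with hD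
  have hDl : D.length = 3 := by simp [hD]
  have hclaim := del_claim hconn hA1 hA3 D (by omega)
  have hconn' : (NCG.graph (Function.update st x0 t)).Connected :=
    detour_conn' (fun w => ⟨(hclaim w).choose⟩)
  have hd' : ∀ w : V, (NCG.graph (Function.update st x0 t)).dist x0 w ≤
      (NCG.graph st).dist x0 w + 2 := by
    intro w
    obtain ⟨q, hq⟩ := hclaim w
    have := dist_le q
    omega
  have hne23 : x2 ≠ x3 := h23.ne
  have hsum : (∑ w : V, (NCG.graph (Function.update st x0 t)).dist x0 w) ≤
      (∑ w : V, (NCG.graph st).dist x0 w) + (Fintype.card V - 3) * 2 := by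
    refine sum_bound_three_exceptions _ _ 2 x0 x2 x3 hne20.symm hne30.symm hne23
      ?_ ?_ ?_ (fun w _ _ _ => hd' w)
    · simp [SimpleGraph.dist_self]
    · have h1 : (NCG.graph (Function.update st x0 t)).dist x0 x2 ≤ 2 :=
        dist_le (Walk.cons hadj03' (Walk.cons hadj32' Walk.nil))
      omega
    · have h1 : (NCG.graph (Function.update st x0 t)).dist x0 x3 ≤ 1 :=
        dist_le (Walk.cons hadj03' Walk.nil)
      have h2 : (NCG.graph st).dist x0 x3 = 1 := dist_eq_one_iff_adj.mpr h30.symm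
      omega
  have hcard : t.card + 1 = (st x0).card := by
    rw [ht, Finset.card_erase_of_mem hbuy]
    have : 1 ≤ (st x0).card := Finset.card_pos.mpr ⟨x1, hbuy⟩
    omega
  have hstab := stable_real hstable hconn hvt hconn'
  have hsum' : (∑ w : V, (NCG.graph (Function.update st x0 t)).dist x0 w) + 6 ≤
      (∑ w : V, (NCG.graph st).dist x0 w) + 2 * Fintype.card V := by
    have : 4 ≤ Fintype.card V := hn
    omega
  have hsr : (∑ w : V, ((NCG.graph (Function.update st x0 t)).dist x0 w : ℝ)) + 6 ≤
      (∑ w : V, ((NCG.graph st).dist x0 w : ℝ)) + 2 * (Fintype.card V : ℝ) := by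
    exact_mod_cast hsum'
  have hc : (t.card : ℝ) + 1 = ((st x0).card : ℝ) := by exact_mod_cast hcard
  nlinarith [hstab, hsr, hc, hα]

end NCGAux2

namespace NCGAux2
open SimpleGraph NCGAux

variable {W : Type*}

lemma path_getVert_inj {G : SimpleGraph W} {a b : W} {p : G.Walk a b} (hp : p.IsPath) :
    ∀ i j : ℕ, i ≤ p.length → j ≤ p.length → p.getVert i = p.getVert j → i = j := by
  induction p with
  | nil => intro i j hi hj _; simp only [Walk.length_nil, Nat.le_zero] at hi hj; omega
  | @cons u v w h q ih =>
    have hq := ((Walk.cons_isPath_iff _ _).mp hp).1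
    have hns := ((Walk.cons_isPath_iff _ _).mp hp).2
    intro i j hi hj he
    rw [Walk.length_cons] at hi hj
    match i, j with
    | 0, 0 => rfl
    | 0, j + 1 =>
      exfalso
      rw [Walk.getVert_zero, Walk.getVert_cons_succ] at he
      exact hns (Walk.mem_support_iff_exists_getVert.mpr ⟨j, he.symm, by omega⟩)
    | i + 1, 0 =>
      exfalso
      rw [Walk.getVert_zero, Walk.getVert_cons_succ] at he
      exact hns (Walk.mem_support_iff_exists_getVert.mpr ⟨i, he, by omega⟩)
    | i + 1, j + 1 =>
      rw [Walk.getVert_cons_succ, Walk.getVert_cons_succ] at he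
      have := ih hq i j (by omega) (by omega) he
      omega

lemma cycle_getVert_inj {G : SimpleGraph W} {a : W} {c : G.Walk a a} (hc : c.IsCycle) :
    ∀ i j : ℕ, i < c.length → j < c.length → c.getVert i = c.getVert j → i = j := by
  cases c with
  | nil => exact absurd hc Walk.IsCycle.not_of_nil
  | @cons _ v _ h p =>
    have hp := ((Walk.cons_isCycle_iff _ _).mp hc).1
    intro i j hi hj he
    rw [Walk.length_cons] at hi hj
    have hpa : p.getVert p.length = a := Walk.getVert_length p
    match i, j with
    | 0, 0 => rfl
    | 0, j + 1 =>
      exfalso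
      rw [Walk.getVert_zero, Walk.getVert_cons_succ] at he
      have := path_getVert_inj hp j p.length (by omega) le_rfl (by rw [hpa, ← he])
      omega
    | i + 1, 0 =>
      exfalso
      rw [Walk.getVert_zero, Walk.getVert_cons_succ] at he
      have := path_getVert_inj hp i p.length (by omega) le_rfl (by rw [hpa, he])
      omega
    | i + 1, j + 1 =>
      rw [Walk.getVert_cons_succ, Walk.getVert_cons_succ] at he
      have := path_getVert_inj hp i j (by omega) (by omega) he
      omega

lemma cycle_getVert_mod {G : SimpleGraph W} {a : W} (c : G.Walk a a) (hlen : 0 < c.length) :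
    ∀ s : ℕ, s ≤ c.length → c.getVert s = c.getVert (s % c.length) := by
  intro s hs
  rcases Nat.lt_or_ge s c.length with h | h
  · rw [Nat.mod_eq_of_lt h]
  · have hs' : s = c.length := by omega
    subst hs'
    rw [Nat.mod_self, Walk.getVert_length, Walk.getVert_zero]

lemma coe_walk_lb {G : SimpleGraph W} {a : W} {c : G.Walk a a} (hc : c.IsCycle) :
    ∀ {A B : c.toSubgraph.verts} (q : c.toSubgraph.coe.Walk A B) (i j : ℕ),
      i < c.length → j < c.length → (A : W) = c.getVert i → (B : W) = c.getVert j →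
      cdist c.length i j ≤ q.length := by
  have hinj := cycle_getVert_inj hc
  have hlen : 0 < c.length := by have := hc.three_le_length; omega
  intro A B q
  induction q with
  | nil =>
    intro i j hi hj hA hB
    have : i = j := hinj i j hi hj (by rw [← hA, ← hB])
    subst this
    rw [cdist_self]
    exact Nat.zero_le _
  | @cons A M B hadj q ih =>
    intro i j hi hj hA hB
    have hadj' : c.toSubgraph.Adj (A : W) (M : W) := hadj
    rw [Walk.toSubgraph_adj_iff] at hadj'
    obtain ⟨t, hsym, ht⟩ := hadj'
    rw [Sym2.eq_iff] at hsym
    have hmain : ∃ m : ℕ, m < c.length ∧ (M : W) = c.getVert m ∧ cdist c.length i m ≤ 1 := by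
      rcases hsym with ⟨hA', hM'⟩ | ⟨hM', hA'⟩
      · -- A = getVert t, M = getVert (t+1)
        have hti : t = i := hinj t i ht hi (by rw [hA', hA])
        refine ⟨(t + 1) % c.length, Nat.mod_lt _ hlen, ?_, ?_⟩
        · rw [← cycle_getVert_mod c hlen (t+1) (by omega), hM']
        · rw [← hti]; exact cdist_step ht
      · -- M = getVert t, A = getVert (t+1)
        have hti : (t + 1) % c.length = i := by
          refine hinj _ i (Nat.mod_lt _ hlen) hi ?_
          rw [← cycle_getVert_mod c hlen (t+1) (by omega), hA', hA]
        refine ⟨t, ht, hM'.symm, ?_⟩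
        rw [← hti, cdist_comm]
        exact cdist_step ht
    obtain ⟨m, hm, hMm, hstep⟩ := hmain
    have hih := ih m j hm hj hMm hB
    have htri := cdist_triangle (k := c.length) hi hm hj
    rw [Walk.length_cons]
    omega

/-- distances in a min cycle are bounded below by the circular distance. -/
lemma min_cycle_dist_lb {G : SimpleGraph W} {a : W} {c : G.Walk a a}
    (hc : NCG.IsMinCycle G c) :
    ∀ i j : ℕ, i < c.length → j < c.length →
      cdist c.length i j ≤ G.dist (c.getVert i) (c.getVert j) := by
  intro i j hi hj
  have hmem : ∀ s : ℕ, s ≤ c.length → c.getVert s ∈ c.toSubgraph.verts := fun s hs =>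
    (Walk.mem_verts_toSubgraph c).mpr (Walk.mem_support_iff_exists_getVert.mpr ⟨s, rfl, hs⟩)
  have hkey := hc.2 (c.getVert i) (hmem i hi.le) (c.getVert j) (hmem j hj.le)
  rw [← hkey]
  have hconnS : c.toSubgraph.Connected := c.toSubgraph_connected
  obtain ⟨q, hq⟩ := hconnS.coe.exists_walk_length_eq_dist
    ⟨c.getVert i, hmem i hi.le⟩ ⟨c.getVert j, hmem j hj.le⟩
  rw [← hq]
  exact coe_walk_lb hc.1 q i j hi hj rfl rfl

/-- arcs of a cyclic vertex sequence give walks of the expected length. -/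
lemma arc_walk {G : SimpleGraph W} {k : ℕ} {x : ℕ → W} (hk : 0 < k)
    (hadj : ∀ t : ℕ, t < k → G.Adj (x t) (x ((t + 1) % k))) :
    ∀ i j : ℕ, i ≤ j → j ≤ k → ∃ p : G.Walk (x (i % k)) (x (j % k)),
      p.length = j - i ∧ ∀ z ∈ p.support, ∃ t : ℕ, i ≤ t ∧ t ≤ j ∧ z = x (t % k) := by
  intro i j hij hjk
  induction j with
  | zero =>
    have : i = 0 := by omega
    subst this
    exact ⟨Walk.nil, by simp, fun z hz => ⟨0, le_rfl, le_rfl, by simpa using hz⟩⟩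
  | succ j ihj =>
    rcases Nat.lt_or_ge i (j + 1) with h | h
    · have hij' : i ≤ j := by omega
      obtain ⟨p, hpl, hps⟩ := ihj hij' (by omega)
      have hadj' : G.Adj (x (j % k)) (x ((j + 1) % k)) := by
        have := hadj (j % k) (Nat.mod_lt _ hk)
        rwa [Nat.mod_add_mod] at this
      refine ⟨p.append (Walk.cons hadj' Walk.nil), ?_, ?_⟩
      · rw [Walk.length_append, hpl]
        simp
        omega
      · intro z hz
        rw [Walk.support_append] at hz
        rcases List.mem_append.mp hz with hz | hz
        · obtain ⟨t, h1, h2, h3⟩ := hps z hz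
          exact ⟨t, h1, by omega, h3⟩
        · simp at hz
          exact ⟨j + 1, by omega, le_rfl, by rw [hz]⟩
    · have : i = j + 1 := by omega
      subst this
      exact ⟨Walk.nil, by simp, fun z hz => ⟨j + 1, le_rfl, le_rfl, by simpa using hz⟩⟩

end NCGAux2

namespace NCGAux2
open SimpleGraph NCGAux

variable {V : Type*} [Fintype V] [DecidableEq V]

lemma no_double {α : ℝ} {st : V → Finset V} (hself : ∀ w, w ∉ st w)
    (hstable : NCG.Stable α st) (hconn : (NCG.graph st).Connected)
    (hα : 2 * (Fintype.card V : ℝ) - 6 < α) {k : ℕ} (hk : 5 ≤ k) {y : ℕ → V}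
    (hinj : ∀ i j : ℕ, i < k → j < k → y i = y j → i = j)
    (hadj : ∀ t : ℕ, t < k → (NCG.graph st).Adj (y t) (y ((t + 1) % k)))
    (hdist : ∀ i j : ℕ, i < k → j < k → cdist k i j ≤ (NCG.graph st).dist (y i) (y j))
    (hb1 : y 1 ∈ st (y 0)) (hb2 : y (k - 1) ∈ st (y 0)) : False := by
  set j : ℕ := k / 2 with hj
  have hj2 : 2 ≤ j := by omega
  have hjk : j + 3 ≤ k := by omega
  have h2j : 2 * j ≤ k ∧ k ≤ 2 * j + 1 := by omega
  have harc := arc_walk (G := NCG.graph st) (k := k) (x := y) (by omega) hadj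
  have hmid : (NCG.graph st).Adj (y j) (y (j + 1)) := by
    have := hadj j (by omega)
    rwa [Nat.mod_eq_of_lt (by omega : j + 1 < k)] at this
  -- arcs (as walks with mod-free endpoints)
  obtain ⟨p1, hp1l, hp1s⟩ := harc 1 j (by omega) (by omega)
  obtain ⟨p2, hp2l, hp2s⟩ := harc j (k - 1) (by omega) (by omega)
  obtain ⟨p3, hp3l, hp3s⟩ := harc (j + 1) k (by omega) (by omega)
  obtain ⟨p4, hp4l, hp4s⟩ := harc (j + 1) (k - 1) (by omega) (by omega)
  obtain ⟨p5, hp5l, hp5s⟩ := harc 1 (j + 1) (by omega) (by omega)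
  obtain ⟨p6, hp6l, hp6s⟩ := harc 0 j (by omega) (by omega)
  have e0 : (0 : ℕ) % k = 0 := Nat.mod_eq_of_lt (by omega)
  have e1 : (1 : ℕ) % k = 1 := Nat.mod_eq_of_lt (by omega)
  have ej : j % k = j := Nat.mod_eq_of_lt (by omega)
  have ej1 : (j + 1) % k = j + 1 := Nat.mod_eq_of_lt (by omega)
  have ek1 : (k - 1) % k = k - 1 := Nat.mod_eq_of_lt (by omega)
  have ek : k % k = 0 := Nat.mod_self k
  rcases (graph_adj.mp hmid).2 with hcase | hcase
  · -- Case A : y (j+1) ∈ st (y j); u := y j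
    have hdvu : j ≤ (NCG.graph st).dist (y 0) (y j) := by
      have h1 := hdist 0 j (by omega) (by omega)
      have h2 : cdist k 0 j = j := by simp only [NCGAux.cdist]; omega
      omega
    refine crit hself hstable hconn hα
      (v := y 0) (v₁ := y 1) (v₂ := y (k - 1)) (u := y j) (u' := y (j + 1))
      (fun h => by have := hinj 1 (k - 1) (by omega) (by omega) h; omega)
      hb1 hb2 hcase
      (fun h => by have := hinj j 0 (by omega) (by omega) h; omega)
      (by omega)
      ((p1.copy (congrArg y e1) (congrArg y ej)).reverse) ?_ ?_
      ((p2.copy (congrArg y ej) (congrArg y ek1)))      ?_ ?_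
      ((p3.copy (congrArg y ej1) (congrArg y ek)).reverse) ?_ ?_
    · intro h
      rw [Walk.support_reverse, List.mem_reverse, Walk.support_copy] at h
      obtain ⟨t, ht1, ht2, htz⟩ := hp1s _ h
      have htk : t % k = t := Nat.mod_eq_of_lt (by omega)
      rw [htk] at htz
      have := hinj 0 t (by omega) (by omega) htz
      omega
    · rw [Walk.length_reverse, Walk.length_copy, hp1l]
      omega
    · intro h
      rw [Walk.support_copy] at h
      obtain ⟨t, ht1, ht2, htz⟩ := hp2s _ h
      have htk : t % k = t := Nat.mod_eq_of_lt (by omega)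
      rw [htk] at htz
      have := hinj 0 t (by omega) (by omega) htz
      omega
    · rw [Walk.length_copy, hp2l]
      omega
    · intro h
      rw [Walk.support_reverse, List.mem_reverse, Walk.support_copy] at h
      obtain ⟨t, ht1, ht2, htz⟩ := hp3s _ h
      have := hinj j (t % k) (by omega) (Nat.mod_lt _ (by omega)) htz
      rcases Nat.lt_or_ge t k with hlt | hge
      · rw [Nat.mod_eq_of_lt hlt] at this; omega
      · have : t = k := by omega
        subst this
        rw [Nat.mod_self] at *
        omega
    · rw [Walk.length_reverse, Walk.length_copy, hp3l]
      omega
  · -- Case B : y j ∈ st (y (j+1)); u := y (j+1)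
    have hdvu : k - j - 1 ≤ (NCG.graph st).dist (y 0) (y (j + 1)) := by
      have h1 := hdist 0 (j + 1) (by omega) (by omega)
      have h2 : cdist k 0 (j + 1) = k - j - 1 := by simp only [NCGAux.cdist]; omega
      omega
    refine crit hself hstable hconn hα
      (v := y 0) (v₁ := y (k - 1)) (v₂ := y 1) (u := y (j + 1)) (u' := y j)
      (fun h => by have := hinj (k - 1) 1 (by omega) (by omega) h; omega)
      hb2 hb1 hcase
      (fun h => by have := hinj (j + 1) 0 (by omega) (by omega) h; omega)
      (by omega)
      ((p4.copy (congrArg y ej1) (congrArg y ek1))) ?_ ?_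
      ((p5.copy (congrArg y e1) (congrArg y ej1)).reverse) ?_ ?_
      ((p6.copy (congrArg y e0) (congrArg y ej))) ?_ ?_
    · intro h
      rw [Walk.support_copy] at h
      obtain ⟨t, ht1, ht2, htz⟩ := hp4s _ h
      have htk : t % k = t := Nat.mod_eq_of_lt (by omega)
      rw [htk] at htz
      have := hinj 0 t (by omega) (by omega) htz
      omega
    · rw [Walk.length_copy, hp4l]
      omega
    · intro h
      rw [Walk.support_reverse, List.mem_reverse, Walk.support_copy] at h
      obtain ⟨t, ht1, ht2, htz⟩ := hp5s _ h
      have htk : t % k = t := Nat.mod_eq_of_lt (by omega)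
      rw [htk] at htz
      have := hinj 0 t (by omega) (by omega) htz
      omega
    · rw [Walk.length_reverse, Walk.length_copy, hp5l]
      omega
    · intro h
      rw [Walk.support_copy] at h
      obtain ⟨t, ht1, ht2, htz⟩ := hp6s _ h
      have htk : t % k = t := Nat.mod_eq_of_lt (by omega)
      rw [htk] at htz
      have := hinj (j + 1) t (by omega) (by omega) htz
      omega
    · rw [Walk.length_copy, hp6l]
      omega

end NCGAux2

/-- For `α > 2n−6`, every min cycle of a non-tree stable network with
`n ≥ 4` agents is directed and has length at least 5. -/
theorem min_cycle_directed_and_long {V : Type*} [Fintype V] [DecidableEq V]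
    (α : ℝ) (st : V → Finset V) (hself : ∀ u, u ∉ st u)
    (hn : 4 ≤ Fintype.card V)
    (hα : 2 * (Fintype.card V : ℝ) - 6 < α)
    (hstable : NCG.Stable α st)
    (hnontree : ¬ ((NCG.graph st).Connected ∧ (NCG.graph st).IsAcyclic)) :
    ∀ (a : V) (c : (NCG.graph st).Walk a a), NCG.IsMinCycle (NCG.graph st) c →
      NCG.IsDirectedCycle st c ∧ 5 ≤ c.length := by
  intro a c hmin
  have hconn : (NCG.graph st).Connected := NCGAux.stable_connected hstable (by omega)
  have hcyc := hmin.1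
  have hk3 : 3 ≤ c.length := hcyc.three_le_length
  have hlen0 : 0 < c.length := by omega
  have hinj := NCGAux2.cycle_getVert_inj hcyc
  have hdist := NCGAux2.min_cycle_dist_lb hmin
  have hmod := NCGAux2.cycle_getVert_mod c hlen0
  have hadjx : ∀ i : ℕ, i < c.length →
      (NCG.graph st).Adj (c.getVert i) (c.getVert (i + 1)) := fun i hi => c.adj_getVert_succ hi
  have h3 : c.length ≠ 3 := by
    intro h3
    have h01 := hadjx 0 (by omega)
    have h12 := hadjx 1 (by omega)
    have h23 := hadjx 2 (by omega)
    have e30 : c.getVert 3 = c.getVert 0 := by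
      rw [hmod 3 (by omega), h3]
    rw [e30] at h23
    rcases (NCGAux.graph_adj.mp h01).2 with hbuy | hbuy
    · exact NCGAux2.no_triangle hself hstable hconn hn hα h01 h12 h23 hbuy
    · exact NCGAux2.no_triangle hself hstable hconn hn hα h01.symm h23.symm h12.symm hbuy
  have h4 : c.length ≠ 4 := by
    intro h4
    have h01 := hadjx 0 (by omega)
    have h12 := hadjx 1 (by omega)
    have h23 := hadjx 2 (by omega)
    have h34 := hadjx 3 (by omega)
    have e40 : c.getVert 4 = c.getVert 0 := by
      rw [hmod 4 (by omega), h4]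
    rw [e40] at h34
    have hd02 : 2 ≤ (NCG.graph st).dist (c.getVert 0) (c.getVert 2) := by
      have h := hdist 0 2 (by omega) (by omega)
      rw [h4] at h
      simp only [NCGAux.cdist] at h
      omega
    have hd13 : 2 ≤ (NCG.graph st).dist (c.getVert 1) (c.getVert 3) := by
      have h := hdist 1 3 (by omega) (by omega)
      rw [h4] at h
      simp only [NCGAux.cdist] at h
      omega
    rcases (NCGAux.graph_adj.mp h01).2 with hbuy | hbuy
    · exact NCGAux2.no_c4 hself hstable hconn hn hα h01 h12 h23 h34 hd02
        (fun h => by have := hinj 3 1 (by omega) (by omega) h; omega) hbuy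
    · exact NCGAux2.no_c4 hself hstable hconn hn hα h01.symm h34.symm h23.symm h12.symm hd13
        (fun h => by have := hinj 2 0 (by omega) (by omega) h; omega) hbuy
  have h5 : 5 ≤ c.length := by omega
  refine ⟨⟨hcyc, ?_⟩, h5⟩
  by_cases hF : ∀ i, i < c.length → c.getVert (i + 1) ∈ st (c.getVert i)
  · exact Or.inl hF
  by_cases hB : ∀ i, i < c.length → c.getVert i ∈ st (c.getVert (i + 1))
  · exact Or.inr hB
  exfalso
  push_neg at hF hB
  obtain ⟨i0, hi0, hnf⟩ := hF
  obtain ⟨i1, hi1, hnb⟩ := hB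
  set L := c.length with hL
  have hP : ∀ t : ℕ, c.getVert ((t + 1) % L) ∈ st (c.getVert (t % L)) ∨
      c.getVert (t % L) ∈ st (c.getVert ((t + 1) % L)) := by
    intro t
    have ht : t % L < L := Nat.mod_lt _ hlen0
    have hA := hadjx (t % L) ht
    have e : c.getVert (t % L + 1) = c.getVert ((t + 1) % L) := by
      rw [hmod (t % L + 1) (by omega), Nat.mod_add_mod]
    rw [e] at hA
    exact (NCGAux.graph_adj.mp hA).2
  by_cases hdouble : ∃ m : ℕ, c.getVert (m % L) ∈ st (c.getVert ((m + 1) % L)) ∧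
      c.getVert ((m + 1 + 1) % L) ∈ st (c.getVert ((m + 1) % L))
  · obtain ⟨m, hQm, hPm⟩ := hdouble
    have ho : (m + 1) % L < L := Nat.mod_lt _ hlen0
    refine NCGAux2.no_double hself hstable hconn hα h5
      (y := fun t => c.getVert (((m + 1) % L + t) % L)) ?_ ?_ ?_ ?_ ?_
    · intro i j hi hj h
      exact NCGAux.mod_inj_of_lt ho hi hj
        (hinj _ _ (Nat.mod_lt _ hlen0) (Nat.mod_lt _ hlen0) h)
    · intro t ht
      beta_reduce
      have hgen : (NCG.graph st).Adj (c.getVert (((m + 1) % L + t) % L))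
          (c.getVert (((m + 1) % L + t + 1) % L)) := by
        have hA := hadjx (((m + 1) % L + t) % L) (Nat.mod_lt _ hlen0)
        have e : c.getVert (((m + 1) % L + t) % L + 1) =
            c.getVert (((m + 1) % L + t + 1) % L) := by
          have hlt : ((m + 1) % L + t) % L < L := Nat.mod_lt _ hlen0
          rw [hmod (((m + 1) % L + t) % L + 1) (by omega), Nat.mod_add_mod]
        rwa [e] at hA
      have e2 : c.getVert (((m + 1) % L + (t + 1) % L) % L) =
          c.getVert (((m + 1) % L + t + 1) % L) := by
        rw [Nat.add_mod_mod, Nat.add_assoc]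
      rw [e2]
      exact hgen
    · intro i j hi hj
      rw [← NCGAux.cdist_shift ho hi hj]
      exact hdist _ _ (Nat.mod_lt _ hlen0) (Nat.mod_lt _ hlen0)
    · -- y 1 ∈ st (y 0)
      beta_reduce
      have e0 : ((m + 1) % L + 0) % L = (m + 1) % L := by
        rw [Nat.add_zero, Nat.mod_eq_of_lt ho]
      have e1 : ((m + 1) % L + 1) % L = (m + 1 + 1) % L := Nat.mod_add_mod _ _ _
      rw [e0, e1]
      exact hPm
    · -- y (L-1) ∈ st (y 0)
      beta_reduce
      have e0 : ((m + 1) % L + 0) % L = (m + 1) % L := by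
        rw [Nat.add_zero, Nat.mod_eq_of_lt ho]
      have e2 : ((m + 1) % L + (L - 1)) % L = m % L := by
        rw [Nat.mod_add_mod, show m + 1 + (L - 1) = m + L by omega, Nat.add_mod_right]
      rw [e0, e2]
      exact hQm
  · push_neg at hdouble
    have hstep : ∀ m : ℕ, c.getVert (m % L) ∈ st (c.getVert ((m + 1) % L)) →
        c.getVert ((m + 1) % L) ∈ st (c.getVert ((m + 1 + 1) % L)) := by
      intro m hQ
      rcases hP (m + 1) with h | h
      · exact absurd h (hdouble m hQ)
      · exact h
    have hQ0 : c.getVert (i0 % L) ∈ st (c.getVert ((i0 + 1) % L)) := by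
      rcases hP i0 with h | h
      · rw [Nat.mod_eq_of_lt hi0, ← hmod (i0 + 1) (by omega)] at h
        exact absurd h hnf
      · exact h
    have hall : ∀ s : ℕ, c.getVert ((i0 + s) % L) ∈ st (c.getVert ((i0 + s + 1) % L)) := by
      intro s
      induction s with
      | zero => simpa using hQ0
      | succ s ih =>
        have h := hstep (i0 + s) ih
        have e : i0 + s + 1 = i0 + (s + 1) := by omega
        rwa [e] at h
    have hcon := hall (i1 + L - i0)
    rw [show i0 + (i1 + L - i0) = i1 + L by omega] at hcon
    rw [show i1 + L + 1 = (i1 + 1) + L by omega] at hcon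
    rw [Nat.add_mod_right, Nat.add_mod_right] at hcon
    rw [Nat.mod_eq_of_lt hi1, ← hmod (i1 + 1) (by omega)] at hcon
    exact hnb hcon
end
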